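/- arXiv:2109.07767 — 7 statements merged into one kernel-verified Lean document; each statement's English description precedes it below -/
import Mathlib

section
/- Let P₁ > 0, P₂ > 0 and let X₁,…,Xₙ, Y₁,…,Yₙ be 2n mutually independent real random variables on a probability space (Ω, 𝒜, ℙ) with Xⱼ distributed as N(0,P₁) and Yⱼ distributed as N(0,P₂) for every j. Then for every δ > 0 with δ ≤ (16/5)·√(P₁·P₂), ℙ( Σ_{j=1}^{n} Xⱼ·Yⱼ ≥ n·δ ) ≤ exp( − n·δ² / (8·P₁·P₂) ). -/
open MeasureTheory ProbabilityTheory Real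

namespace SubexpAux

variable {v : NNReal}

lemma integral_gaussianReal_eq (m : ℝ) (hv : v ≠ 0) (g : ℝ → ℝ) :
    ∫ x, g x ∂(gaussianReal m v) = ∫ x, gaussianPDFReal m v x * g x := by
  rw [gaussianReal_of_var_ne_zero m hv]
  have h1 : (gaussianPDF m v) = fun x => ((gaussianPDFReal m v x).toNNReal : ENNReal) := by
    funext x; rfl
  rw [h1, integral_withDensity_eq_integral_smul
    ((measurable_gaussianPDFReal m v).real_toNNReal) g]
  refine integral_congr_ae (Filter.Eventually.of_forall fun x => ?_)
  simp [NNReal.smul_def, Real.coe_toNNReal _ (gaussianPDFReal_nonneg m v x)]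

lemma integrable_gaussianReal_iff (m : ℝ) (hv : v ≠ 0) {g : ℝ → ℝ} :
    Integrable g (gaussianReal m v) ↔ Integrable (fun x => g x * gaussianPDFReal m v x) := by
  rw [gaussianReal_of_var_ne_zero m hv]
  rw [integrable_withDensity_iff (measurable_gaussianPDF m v)
    (Filter.Eventually.of_forall fun x => ENNReal.ofReal_lt_top)]
  refine integrable_congr (Filter.Eventually.of_forall fun x => ?_)
  rw [gaussianPDF_def]; simp only []; rw [ENNReal.toReal_ofReal (gaussianPDFReal_nonneg m v x)]

end SubexpAux

namespace SubexpAux2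
open SubexpAux

lemma pdf_mul_exp (v : NNReal) (hv : v ≠ 0) (s y : ℝ) :
    gaussianPDFReal 0 v y * Real.exp (s * y)
      = Real.exp ((v : ℝ) * s ^ 2 / 2) * gaussianPDFReal ((v : ℝ) * s) v y := by
  have hv' : (0 : ℝ) < v := lt_of_le_of_ne v.coe_nonneg (by exact_mod_cast (Ne.symm hv))
  simp only [gaussianPDFReal]
  rw [show (√(2 * π * v))⁻¹ * rexp (-(y - 0) ^ 2 / (2 * v)) * rexp (s * y)
      = (√(2 * π * v))⁻¹ * (rexp (-(y - 0) ^ 2 / (2 * v)) * rexp (s * y)) by ring,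
    show rexp ((v:ℝ) * s ^ 2 / 2) * ((√(2 * π * v))⁻¹ * rexp (-(y - (v:ℝ) * s) ^ 2 / (2 * v)))
      = (√(2 * π * v))⁻¹ * (rexp ((v:ℝ) * s ^ 2 / 2) * rexp (-(y - (v:ℝ) * s) ^ 2 / (2 * v))) by
      ring, ← Real.exp_add, ← Real.exp_add]
  congr 1
  field_simp
  ring

lemma integrable_exp_mul (v : NNReal) (hv : v ≠ 0) (s : ℝ) :
    Integrable (fun y => Real.exp (s * y)) (gaussianReal 0 v) := by
  rw [integrable_gaussianReal_iff 0 hv]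
  have : (fun y => Real.exp (s * y) * gaussianPDFReal 0 v y)
      = fun y => Real.exp ((v : ℝ) * s ^ 2 / 2) * gaussianPDFReal ((v : ℝ) * s) v y := by
    funext y; rw [mul_comm (rexp (s*y))]; exact pdf_mul_exp v hv s y
  rw [this]
  exact (integrable_gaussianPDFReal _ v).const_mul _

lemma integral_exp_mul (v : NNReal) (hv : v ≠ 0) (s : ℝ) :
    ∫ y, Real.exp (s * y) ∂(gaussianReal 0 v) = Real.exp ((v : ℝ) * s ^ 2 / 2) := by
  rw [integral_gaussianReal_eq 0 hv]
  have : (fun y => gaussianPDFReal 0 v y * Real.exp (s * y))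
      = fun y => Real.exp ((v : ℝ) * s ^ 2 / 2) * gaussianPDFReal ((v : ℝ) * s) v y := by
    funext y; exact pdf_mul_exp v hv s y
  rw [this, integral_const_mul, integral_gaussianPDFReal_eq_one _ hv, mul_one]

end SubexpAux2

namespace SubexpAux3
open SubexpAux

lemma pdf_mul_exp_sq (v : NNReal) (hv : v ≠ 0) {c : ℝ} (hc : 0 ≤ c)
    (h1 : 2 * c * (v : ℝ) < 1) (x : ℝ) :
    gaussianPDFReal 0 v x * Real.exp (c * x ^ 2)
      = (Real.sqrt (1 - 2 * c * (v : ℝ)))⁻¹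
        * gaussianPDFReal 0 ((v : ℝ) / (1 - 2 * c * (v : ℝ))).toNNReal x := by
  have hv' : (0 : ℝ) < v := lt_of_le_of_ne v.coe_nonneg (by exact_mod_cast (Ne.symm hv))
  set w : ℝ := 1 - 2 * c * (v : ℝ) with hw
  have hw' : 0 < w := by linarith
  have hco : (((((v : ℝ) / w).toNNReal) : NNReal) : ℝ) = (v : ℝ) / w :=
    Real.coe_toNNReal _ (by positivity)
  simp only [gaussianPDFReal, hco, sub_zero]
  rw [show (√w)⁻¹ * ((√(2 * π * ((v:ℝ) / w)))⁻¹ * rexp (-x ^ 2 / (2 * ((v:ℝ) / w))))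
      = ((√w) * (√(2 * π * ((v:ℝ) / w))))⁻¹ * rexp (-x ^ 2 / (2 * ((v:ℝ) / w))) by
      rw [mul_inv]; ring]
  rw [← Real.sqrt_mul hw'.le]
  rw [show w * (2 * π * ((v:ℝ) / w)) = 2 * π * (v : ℝ) by field_simp]
  rw [mul_assoc, ← Real.exp_add]
  congr 1
  field_simp
  try ring
  rw [hw]; ring

lemma integrable_exp_sq (v : NNReal) (hv : v ≠ 0) {c : ℝ} (hc : 0 ≤ c)
    (h1 : 2 * c * (v : ℝ) < 1) :
    Integrable (fun x => Real.exp (c * x ^ 2)) (gaussianReal 0 v) := by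
  rw [integrable_gaussianReal_iff 0 hv]
  have : (fun x => Real.exp (c * x ^ 2) * gaussianPDFReal 0 v x)
      = fun x => (Real.sqrt (1 - 2 * c * (v : ℝ)))⁻¹
        * gaussianPDFReal 0 ((v : ℝ) / (1 - 2 * c * (v : ℝ))).toNNReal x := by
    funext x; rw [mul_comm]; exact pdf_mul_exp_sq v hv hc h1 x
  rw [this]
  exact (integrable_gaussianPDFReal _ _).const_mul _

lemma integral_exp_sq (v : NNReal) (hv : v ≠ 0) {c : ℝ} (hc : 0 ≤ c)
    (h1 : 2 * c * (v : ℝ) < 1) :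
    ∫ x, Real.exp (c * x ^ 2) ∂(gaussianReal 0 v)
      = (Real.sqrt (1 - 2 * c * (v : ℝ)))⁻¹ := by
  have hv' : (0 : ℝ) < v := lt_of_le_of_ne v.coe_nonneg (by exact_mod_cast (Ne.symm hv))
  have hvw : (((v : ℝ) / (1 - 2 * c * (v : ℝ))).toNNReal) ≠ 0 := by
    have h2 : (0:ℝ) < (v : ℝ) / (1 - 2 * c * (v : ℝ)) := div_pos hv' (by linarith)
    rw [← NNReal.coe_ne_zero, Real.coe_toNNReal _ h2.le]
    exact ne_of_gt h2
  rw [integral_gaussianReal_eq 0 hv]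
  have : (fun x => gaussianPDFReal 0 v x * Real.exp (c * x ^ 2))
      = fun x => (Real.sqrt (1 - 2 * c * (v : ℝ)))⁻¹
        * gaussianPDFReal 0 ((v : ℝ) / (1 - 2 * c * (v : ℝ))).toNNReal x := by
    funext x; exact pdf_mul_exp_sq v hv hc h1 x
  rw [this, integral_const_mul, integral_gaussianPDFReal_eq_one _ hvw, mul_one]

end SubexpAux3

namespace SubexpAux4

lemma term_aux
    {Ωs : Type*} [MeasureSpace Ωs] [IsProbabilityMeasure (ℙ : Measure Ωs)]
    {P₁ P₂ : ℝ} (hP₁ : 0 < P₁) (hP₂ : 0 < P₂)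
    {X Y : Ωs → ℝ} (hX : Measurable X) (hY : Measurable Y)
    (hXlaw : Measure.map X ℙ = gaussianReal 0 P₁.toNNReal)
    (hYlaw : Measure.map Y ℙ = gaussianReal 0 P₂.toNNReal)
    (hind : IndepFun X Y ℙ) (t : ℝ) (hu : t ^ 2 * (P₁ * P₂) < 1) :
    Integrable (fun ω => rexp (t * (X ω * Y ω))) ℙ ∧
    ∫ ω, rexp (t * (X ω * Y ω)) ∂ℙ = (Real.sqrt (1 - t ^ 2 * (P₁ * P₂)))⁻¹ := by
  have h₁ : P₁.toNNReal ≠ 0 := ne_of_gt (Real.toNNReal_pos.mpr hP₁)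
  have h₂ : P₂.toNNReal ≠ 0 := ne_of_gt (Real.toNNReal_pos.mpr hP₂)
  have hc1 : (P₁.toNNReal : ℝ) = P₁ := Real.coe_toNNReal _ hP₁.le
  have hc2 : (P₂.toNNReal : ℝ) = P₂ := Real.coe_toNNReal _ hP₂.le
  have hpm : Measurable (fun ω => (X ω, Y ω)) := hX.prodMk hY
  have hmap : Measure.map (fun ω => (X ω, Y ω)) ℙ
      = (gaussianReal 0 P₁.toNNReal).prod (gaussianReal 0 P₂.toNNReal) := by
    rw [← hXlaw, ← hYlaw]
    exact (indepFun_iff_map_prod_eq_prod_map_map hX.aemeasurable hY.aemeasurable).mp hind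
  set f : ℝ × ℝ → ℝ := fun p => rexp (t * (p.1 * p.2)) with hf
  have hfm : Measurable f := ((measurable_fst.mul measurable_snd).const_mul t).exp
  set c : ℝ := P₂ * t ^ 2 / 2 with hcdef
  have hc : 0 ≤ c := by positivity
  have h2c : 2 * c * (P₁.toNNReal : ℝ) < 1 := by rw [hc1, hcdef]; nlinarith
  have hslice : ∀ x : ℝ, Integrable (fun y => f (x, y)) (gaussianReal 0 P₂.toNNReal) := by
    intro x
    have h3 := SubexpAux2.integrable_exp_mul _ h₂ (t * x)
    refine h3.congr (Filter.Eventually.of_forall fun y => ?_)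
    simp only [hf]; ring_nf
  have hslice_int : ∀ x : ℝ,
      ∫ y, f (x, y) ∂(gaussianReal 0 P₂.toNNReal) = rexp (c * x ^ 2) := by
    intro x
    have h := SubexpAux2.integral_exp_mul _ h₂ (t * x)
    have e1 : ∫ y, f (x, y) ∂(gaussianReal 0 P₂.toNNReal)
        = ∫ y, rexp ((t * x) * y) ∂(gaussianReal 0 P₂.toNNReal) := by
      congr 1; funext y; simp only [hf]; ring_nf
    rw [e1, h, hc2]
    congr 1; rw [hcdef]; ring
  have hnormint : Integrable (fun x => ∫ y, ‖f (x, y)‖ ∂(gaussianReal 0 P₂.toNNReal))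
      (gaussianReal 0 P₁.toNNReal) := by
    have hfun : (fun x => ∫ y, ‖f (x, y)‖ ∂(gaussianReal 0 P₂.toNNReal))
        = fun x => rexp (c * x ^ 2) := by
      funext x
      rw [← hslice_int x]
      congr 1; funext y; rw [Real.norm_eq_abs, abs_of_pos (Real.exp_pos _)]
    rw [hfun]
    exact SubexpAux3.integrable_exp_sq _ h₁ hc h2c
  have hprod : Integrable f ((gaussianReal 0 P₁.toNNReal).prod (gaussianReal 0 P₂.toNNReal)) := by
    rw [integrable_prod_iff hfm.aestronglyMeasurable]
    exact ⟨Filter.Eventually.of_forall hslice, hnormint⟩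
  have hint : ∫ p, f p ∂((gaussianReal 0 P₁.toNNReal).prod (gaussianReal 0 P₂.toNNReal))
      = (Real.sqrt (1 - t ^ 2 * (P₁ * P₂)))⁻¹ := by
    rw [integral_prod _ hprod]
    have e2 : (fun x => ∫ y, f (x, y) ∂(gaussianReal 0 P₂.toNNReal))
        = fun x => rexp (c * x ^ 2) := funext hslice_int
    rw [e2, SubexpAux3.integral_exp_sq _ h₁ hc h2c]
    congr 2
    rw [hc1, hcdef]; ring
  constructor
  · have h5 : Integrable f (Measure.map (fun ω => (X ω, Y ω)) ℙ) := hmap ▸ hprod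
    exact (integrable_map_measure hfm.aestronglyMeasurable hpm.aemeasurable).mp h5
  · calc ∫ ω, rexp (t * (X ω * Y ω)) ∂ℙ
        = ∫ p, f p ∂(Measure.map (fun ω => (X ω, Y ω)) ℙ) :=
          (integral_map hpm.aemeasurable hfm.aestronglyMeasurable).symm
      _ = _ := by rw [hmap, hint]

end SubexpAux4

namespace SubexpAux5

lemma inv_sqrt_le {w : ℝ} (h0 : 0 ≤ w) (h34 : w ≤ 3 / 4) :
    (Real.sqrt (1 - w))⁻¹ ≤ rexp (2 * w) := by
  have he := Real.add_one_le_exp (4 * w)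
  have hepos : (0:ℝ) < rexp (4 * w) := Real.exp_pos _
  have h1 : rexp (-(4 * w)) ≤ 1 - w := by
    rw [Real.exp_neg]
    have h2 : (rexp (4 * w))⁻¹ ≤ (1 + 4 * w)⁻¹ := by
      apply inv_anti₀ (by linarith) (by linarith)
    have h3 : (1 + 4 * w)⁻¹ ≤ 1 - w := by
      rw [inv_le_iff_one_le_mul₀ (by linarith)]
      nlinarith
    linarith
  have h4 : rexp (-(2 * w)) ≤ Real.sqrt (1 - w) := by
    have h5 : rexp (-(2 * w)) = Real.sqrt (rexp (-(4 * w))) := by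
      rw [show rexp (-(4 * w)) = rexp (-(2 * w)) * rexp (-(2 * w)) by
        rw [← Real.exp_add]; ring_nf]
      rw [Real.sqrt_mul_self (Real.exp_pos _).le]
    rw [h5]
    exact Real.sqrt_le_sqrt h1
  calc (Real.sqrt (1 - w))⁻¹ ≤ (rexp (-(2 * w)))⁻¹ :=
        inv_anti₀ (Real.exp_pos _) h4
    _ = rexp (2 * w) := by rw [← Real.exp_neg, neg_neg]

lemma indep_sum_term
    {Ωs : Type*} [MeasureSpace Ωs] {n : ℕ} {X Y : Fin n → Ωs → ℝ}
    (hXmeas : ∀ j, Measurable (X j)) (hYmeas : ∀ j, Measurable (Y j))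
    (hindep : iIndepFun (Sum.elim X Y) ℙ)
    (s : Finset (Fin n)) (i : Fin n) (hi : i ∉ s) :
    IndepFun (fun ω => ∑ j ∈ s, X j ω * Y j ω) (fun ω => X i ω * Y i ω) ℙ := by
  classical
  have hFm : ∀ k, Measurable (Sum.elim X Y k) := by
    rintro (j | j)
    · exact hXmeas j
    · exact hYmeas j
  set S : Finset (Fin n ⊕ Fin n) := s.image Sum.inl ∪ s.image Sum.inr with hS
  set T : Finset (Fin n ⊕ Fin n) := {Sum.inl i, Sum.inr i} with hT
  have hST : Disjoint S T := by
    rw [Finset.disjoint_left]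
    intro k hkS hkT
    simp only [hS, hT, Finset.mem_union, Finset.mem_image, Finset.mem_insert,
      Finset.mem_singleton] at hkS hkT
    rcases hkT with rfl | rfl <;> rcases hkS with ⟨j, hj, hcon⟩ | ⟨j, hj, hcon⟩ <;>
      simp_all <;> exact hi (hcon ▸ hj)
  have h0 := hindep.indepFun_finset S T hST hFm
  have hmem₁ : ∀ j ∈ s, Sum.inl j ∈ S := fun j hj =>
    Finset.mem_union_left _ (Finset.mem_image_of_mem _ hj)
  have hmem₂ : ∀ j ∈ s, Sum.inr j ∈ S := fun j hj =>
    Finset.mem_union_right _ (Finset.mem_image_of_mem _ hj)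
  set φ : ((k : S) → ℝ) → ℝ :=
    fun v => ∑ j ∈ s.attach, v ⟨Sum.inl j.1, hmem₁ j.1 j.2⟩ * v ⟨Sum.inr j.1, hmem₂ j.1 j.2⟩
    with hφ
  set ψ : ((k : T) → ℝ) → ℝ :=
    fun v => v ⟨Sum.inl i, by simp [hT]⟩ * v ⟨Sum.inr i, by simp [hT]⟩ with hψ
  have hφm : Measurable φ :=
    Finset.measurable_sum _ fun j _ => (measurable_pi_apply _).mul (measurable_pi_apply _)
  have hψm : Measurable ψ := (measurable_pi_apply _).mul (measurable_pi_apply _)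
  have hc := h0.comp hφm hψm
  have heq1 : (fun ω => ∑ j ∈ s, X j ω * Y j ω)
      = φ ∘ (fun a (k : S) => Sum.elim X Y k a) := by
    funext a
    rw [← Finset.sum_attach s (fun j => X j a * Y j a)]
    rfl
  have heq2 : (fun ω => X i ω * Y i ω) = ψ ∘ (fun a (k : T) => Sum.elim X Y k a) := rfl
  rw [heq1, heq2]
  exact hc

end SubexpAux5

namespace SubexpAux6
open SubexpAux5

lemma sum_exp_induction
    {Ωs : Type*} [MeasureSpace Ωs] [IsProbabilityMeasure (ℙ : Measure Ωs)]
    {n : ℕ} {X Y : Fin n → Ωs → ℝ}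
    (hXmeas : ∀ j, Measurable (X j)) (hYmeas : ∀ j, Measurable (Y j))
    (hindep : iIndepFun (Sum.elim X Y) ℙ)
    (t : ℝ) (K : ℝ)
    (hterm_int : ∀ j, Integrable (fun ω => rexp (t * (X j ω * Y j ω))) ℙ)
    (hterm_val : ∀ j, ∫ ω, rexp (t * (X j ω * Y j ω)) ∂ℙ = K)
    (s : Finset (Fin n)) :
    Integrable (fun ω => rexp (t * ∑ j ∈ s, X j ω * Y j ω)) ℙ ∧
    ∫ ω, rexp (t * ∑ j ∈ s, X j ω * Y j ω) ∂ℙ = K ^ s.card := by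
  classical
  induction s using Finset.induction_on with
  | empty => simp
  | @insert i s hi IH =>
    have heq : (fun ω => rexp (t * ∑ j ∈ insert i s, X j ω * Y j ω))
        = fun ω => rexp (t * (X i ω * Y i ω)) * rexp (t * ∑ j ∈ s, X j ω * Y j ω) := by
      funext ω
      rw [Finset.sum_insert hi, mul_add, Real.exp_add]
    have hind := (indep_sum_term hXmeas hYmeas hindep s i hi).symm
    have hexpm : Measurable (fun x : ℝ => rexp (t * x)) := (measurable_id.const_mul t).exp
    have hind2 : IndepFun (fun ω => rexp (t * (X i ω * Y i ω)))
        (fun ω => rexp (t * ∑ j ∈ s, X j ω * Y j ω)) ℙ := hind.comp hexpm hexpm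
    constructor
    · rw [heq]
      exact hind2.integrable_mul (hterm_int i) IH.1
    · rw [heq]
      have := hind2.integral_mul_eq_mul_integral (hterm_int i).aestronglyMeasurable IH.1.aestronglyMeasurable
      rw [show (fun ω => rexp (t * (X i ω * Y i ω)) * rexp (t * ∑ j ∈ s, X j ω * Y j ω))
          = (fun ω => rexp (t * (X i ω * Y i ω))) * fun ω => rexp (t * ∑ j ∈ s, X j ω * Y j ω)
          from rfl, this, hterm_val i, IH.2, Finset.card_insert_of_notMem hi, pow_succ]
      ring

end SubexpAux6


/-- Sub-exponential tail bound (52): for mutually independent `Xⱼ ~ N(0,P₁)`,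
`Yⱼ ~ N(0,P₂)` and `0 < δ ≤ (16/5)√(P₁P₂)`,
`ℙ(Σ XⱼYⱼ ≥ nδ) ≤ exp(-nδ²/(8P₁P₂))`. -/
theorem subexp_tail_sum_products_of_gaussians
    {Ω : Type*} [MeasureSpace Ω] [IsProbabilityMeasure (ℙ : Measure Ω)]
    (P₁ P₂ : ℝ) (hP₁ : 0 < P₁) (hP₂ : 0 < P₂)
    (n : ℕ) (X Y : Fin n → Ω → ℝ)
    (hXmeas : ∀ j, Measurable (X j)) (hYmeas : ∀ j, Measurable (Y j))
    (hindep : iIndepFun (Sum.elim X Y) ℙ)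
    (hXlaw : ∀ j, Measure.map (X j) ℙ = gaussianReal 0 P₁.toNNReal)
    (hYlaw : ∀ j, Measure.map (Y j) ℙ = gaussianReal 0 P₂.toNNReal) :
    ∀ δ : ℝ, 0 < δ → δ ≤ (16 / 5) * Real.sqrt (P₁ * P₂) →
      (ℙ {ω | (n : ℝ) * δ ≤ ∑ j, X j ω * Y j ω}).toReal ≤
        Real.exp (-(n * δ ^ 2 / (8 * P₁ * P₂))) := by
  intro δ hδ hδle
  have hPP : (0:ℝ) < P₁ * P₂ := mul_pos hP₁ hP₂
  set t : ℝ := δ / (4 * (P₁ * P₂)) with htdef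
  have ht : 0 ≤ t := by positivity
  have hδsq : δ ^ 2 ≤ 256 / 25 * (P₁ * P₂) := by
    have h1 : δ ^ 2 ≤ ((16 / 5) * Real.sqrt (P₁ * P₂)) ^ 2 := by
      apply pow_le_pow_left₀ hδ.le hδle
    calc δ ^ 2 ≤ ((16 / 5) * Real.sqrt (P₁ * P₂)) ^ 2 := h1
      _ = 256 / 25 * (Real.sqrt (P₁ * P₂)) ^ 2 := by ring
      _ = 256 / 25 * (P₁ * P₂) := by rw [Real.sq_sqrt hPP.le]
  have hueq : t ^ 2 * (P₁ * P₂) = δ ^ 2 / (16 * (P₁ * P₂)) := by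
    rw [htdef]; field_simp; ring
  have hu0 : 0 ≤ t ^ 2 * (P₁ * P₂) := by positivity
  have hu34 : t ^ 2 * (P₁ * P₂) ≤ 3 / 4 := by
    rw [hueq]
    rw [div_le_iff₀ (by positivity)]
    nlinarith
  have hu1 : t ^ 2 * (P₁ * P₂) < 1 := lt_of_le_of_lt hu34 (by norm_num)
  set K : ℝ := (Real.sqrt (1 - t ^ 2 * (P₁ * P₂)))⁻¹ with hK
  have hterm : ∀ j, Integrable (fun ω => rexp (t * (X j ω * Y j ω))) ℙ ∧
      ∫ ω, rexp (t * (X j ω * Y j ω)) ∂ℙ = K := by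
    intro j
    have hindXY : IndepFun (X j) (Y j) ℙ :=
      hindep.indepFun (show (Sum.inl j : Fin n ⊕ Fin n) ≠ Sum.inr j by simp)
    exact SubexpAux4.term_aux hP₁ hP₂ (hXmeas j) (hYmeas j) (hXlaw j) (hYlaw j) hindXY t hu1
  have hsum := SubexpAux6.sum_exp_induction hXmeas hYmeas hindep t K
    (fun j => (hterm j).1) (fun j => (hterm j).2) Finset.univ
  have hcard : (Finset.univ : Finset (Fin n)).card = n := by simp
  have hchern := measure_ge_le_exp_mul_mgf (μ := ℙ)
    (X := fun ω => ∑ j, X j ω * Y j ω) ((n : ℝ) * δ) ht hsum.1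
  have hmgf : mgf (fun ω => ∑ j, X j ω * Y j ω) ℙ t = K ^ n := by
    have h6 := hsum.2
    rw [hcard] at h6
    exact h6
  have hKle : K ≤ rexp (2 * (t ^ 2 * (P₁ * P₂))) := SubexpAux5.inv_sqrt_le hu0 hu34
  have hK0 : 0 ≤ K := by rw [hK]; positivity
  calc (ℙ {ω | (n : ℝ) * δ ≤ ∑ j, X j ω * Y j ω}).toReal
      ≤ rexp (-t * ((n : ℝ) * δ)) * mgf (fun ω => ∑ j, X j ω * Y j ω) ℙ t := hchern
    _ ≤ rexp (-t * ((n : ℝ) * δ)) * rexp (2 * (t ^ 2 * (P₁ * P₂))) ^ n := by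
        rw [hmgf]
        exact mul_le_mul_of_nonneg_left (pow_le_pow_left₀ hK0 hKle n) (Real.exp_pos _).le
    _ = rexp (-t * ((n : ℝ) * δ) + n * (2 * (t ^ 2 * (P₁ * P₂)))) := by
        rw [← Real.exp_nat_mul, ← Real.exp_add]
    _ = rexp (-((n : ℝ) * δ ^ 2 / (8 * P₁ * P₂))) := by
        congr 1
        rw [htdef]
        field_simp
        ring
end

section
/- Fix δ > 0 and nonnegative reals P_T, P₁₁, P₁₂, P₂ with P̄₁₁ := P₁₁ − δ ≥ 0, P̄₁₂ := P₁₂ − δ ≥ 0, P̄₂ := P₂ − δ ≥ 0. There exist constants c > 0 and C ≥ 0, depending only on δ, P_T, P₁₁, P₁₂, P₂, such that the following holds: for all integers n₁ ≥ n₂ ≥ 1 satisfying n₂·(P₁₁ + P₂) + (n₁ − n₂)·P₁₂ ≤ n₁·P_T, and for any mutually independent real random variables X_{1,1},…,X_{1,n₁}, X_{2,1},…,X_{2,n₂} on a probability space (Ω, 𝒜, ℙ) with X_{1,j} distributed as N(0, P̄₁₁) for 1 ≤ j ≤ n₂, X_{1,j} distributed as N(0, P̄₁₂) for n₂ < j ≤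 n₁, and X_{2,j} distributed as N(0, P̄₂) for 1 ≤ j ≤ n₂, one has ℙ( Σ_{j=1}^{n₂} (X_{1,j} + X_{2,j})² + Σ_{j=n₂+1}^{n₁} X_{1,j}² > n₁·P_T ) ≤ C·exp(−c·n₂). -/
open MeasureTheory ProbabilityTheory Real
open scoped NNReal ENNReal

lemma aux_inv_le_exp {u : ℝ} (h0 : 0 ≤ u) (h1 : u ≤ 1/2) :
    (1 - u)⁻¹ ≤ Real.exp (u + 2*u^2) := by
  have h2 : (0:ℝ) < 1 - u := by linarith
  have h3 : (u + 2*u^2) + 1 ≤ Real.exp (u + 2*u^2) := Real.add_one_le_exp _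
  have h4 : (1 - u)⁻¹ ≤ (u + 2*u^2) + 1 := by
    rw [inv_le_iff_one_le_mul₀ h2]
    nlinarith
  linarith

lemma aux_inv_sqrt_le_exp {u : ℝ} (h0 : 0 ≤ u) (h1 : u ≤ 1/2) :
    (Real.sqrt (1 - u))⁻¹ ≤ Real.exp (u/2 + u^2) := by
  rw [← Real.sqrt_inv]
  have h : Real.exp (u/2 + u^2) = Real.sqrt (Real.exp (u + 2*u^2)) := by
    rw [← Real.exp_half]; ring_nf
  rw [h]
  exact Real.sqrt_le_sqrt (aux_inv_le_exp h0 h1)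

lemma aux_pointwise (v : ℝ≥0) (hv : v ≠ 0) {t : ℝ} (a : ℝ) (hvt : 2*t*(v:ℝ) < 1) (x : ℝ) :
    Real.exp (t*(x+a)^2) * gaussianPDFReal 0 v x
      = ((Real.sqrt (2*π*(v:ℝ)))⁻¹ * Real.exp (t*a^2/(1-2*t*(v:ℝ)))) *
        Real.exp (-((1-2*t*(v:ℝ))/(2*(v:ℝ))) * (x - (2*(v:ℝ)*t*a/(1-2*t*(v:ℝ))))^2) := by
  have hv0 : (0:ℝ) < (v:ℝ) := by
    exact_mod_cast lt_of_le_of_ne zero_le (Ne.symm hv)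
  have h1 : (0:ℝ) < 1 - 2*t*(v:ℝ) := by linarith
  have key : t*(x+a)^2 + -(x-0)^2/(2*(v:ℝ)) =
      t*a^2/(1-2*t*(v:ℝ)) + -((1-2*t*(v:ℝ))/(2*(v:ℝ))) * (x - 2*(v:ℝ)*t*a/(1-2*t*(v:ℝ)))^2 := by
    obtain ⟨d, hd⟩ : ∃ d : ℝ, d = 1-2*t*(v:ℝ) := ⟨_, rfl⟩
    have hd0 : d ≠ 0 := by rw [hd]; exact h1.ne'
    rw [← hd]
    field_simp
    rw [hd]
    ring
  rw [gaussianPDFReal]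
  calc Real.exp (t*(x+a)^2) * ((Real.sqrt (2*π*(v:ℝ)))⁻¹ * Real.exp (-(x-0)^2/(2*(v:ℝ))))
      = (Real.sqrt (2*π*(v:ℝ)))⁻¹ * Real.exp (t*(x+a)^2 + -(x-0)^2/(2*(v:ℝ))) := by
        rw [Real.exp_add]; ring
    _ = _ := by rw [key, Real.exp_add]; ring

lemma aux_integrable (v : ℝ≥0) {t : ℝ} (a : ℝ) (hvt : 2*t*(v:ℝ) < 1) :
    Integrable (fun x => Real.exp (t*(x+a)^2)) (gaussianReal 0 v) := by
  by_cases hv : v = 0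
  · subst hv
    rw [gaussianReal_zero_var]
    constructor
    · exact (by fun_prop : Measurable fun x => Real.exp (t*(x+a)^2)).aestronglyMeasurable
    · simp [HasFiniteIntegral, lintegral_dirac]
  · have hv0 : (0:ℝ) < (v:ℝ) := by
      exact_mod_cast lt_of_le_of_ne zero_le (Ne.symm hv)
    have h1 : (0:ℝ) < 1 - 2*t*(v:ℝ) := by linarith
    have hb : (0:ℝ) < (1-2*t*(v:ℝ))/(2*(v:ℝ)) := by positivity
    rw [gaussianReal_of_var_ne_zero _ hv, gaussianPDF_def]
    rw [integrable_withDensity_iff ((measurable_gaussianPDFReal 0 v).ennreal_ofReal) (ae_of_all _ fun x => ENNReal.ofReal_lt_top)]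
    have : (fun x => Real.exp (t*(x+a)^2) * (ENNReal.ofReal (gaussianPDFReal 0 v x)).toReal)
        = fun x => ((Real.sqrt (2*π*(v:ℝ)))⁻¹ * Real.exp (t*a^2/(1-2*t*(v:ℝ)))) *
          Real.exp (-((1-2*t*(v:ℝ))/(2*(v:ℝ))) * (x - (2*(v:ℝ)*t*a/(1-2*t*(v:ℝ))))^2) := by
      funext x
      rw [ENNReal.toReal_ofReal (gaussianPDFReal_nonneg _ _ _)]
      exact aux_pointwise v hv a hvt x
    rw [this]
    exact (((integrable_exp_neg_mul_sq hb).comp_sub_right _).const_mul _)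

lemma aux_integral (v : ℝ≥0) {t : ℝ} (a : ℝ) (hvt : 2*t*(v:ℝ) < 1) :
    ∫ x, Real.exp (t*(x+a)^2) ∂(gaussianReal 0 v)
      = (Real.sqrt (1-2*t*(v:ℝ)))⁻¹ * Real.exp (t*a^2/(1-2*t*(v:ℝ))) := by
  by_cases hv : v = 0
  · subst hv
    rw [gaussianReal_zero_var, integral_dirac]
    norm_num
  · have hv0 : (0:ℝ) < (v:ℝ) := by
      exact_mod_cast lt_of_le_of_ne zero_le (Ne.symm hv)
    have h1 : (0:ℝ) < 1 - 2*t*(v:ℝ) := by linarith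
    have hb : (0:ℝ) < (1-2*t*(v:ℝ))/(2*(v:ℝ)) := by positivity
    rw [gaussianReal_of_var_ne_zero _ hv, gaussianPDF_def]
    have hd : (fun x => ENNReal.ofReal (gaussianPDFReal 0 v x))
        = fun x => (((gaussianPDFReal 0 v x).toNNReal : ℝ≥0) : ℝ≥0∞) := rfl
    rw [hd, integral_withDensity_eq_integral_smul
      ((measurable_gaussianPDFReal 0 v).real_toNNReal) _]
    have h2 : (fun x => ((gaussianPDFReal 0 v x).toNNReal : ℝ≥0) • Real.exp (t*(x+a)^2))
        = fun x => ((Real.sqrt (2*π*(v:ℝ)))⁻¹ * Real.exp (t*a^2/(1-2*t*(v:ℝ)))) *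
          Real.exp (-((1-2*t*(v:ℝ))/(2*(v:ℝ))) * (x - (2*(v:ℝ)*t*a/(1-2*t*(v:ℝ))))^2) := by
      funext x
      rw [NNReal.smul_def, smul_eq_mul, Real.coe_toNNReal _ (gaussianPDFReal_nonneg _ _ _),
        mul_comm]
      exact aux_pointwise v hv a hvt x
    rw [h2, integral_const_mul]
    rw [integral_sub_right_eq_self (fun x => Real.exp (-((1-2*t*(v:ℝ))/(2*(v:ℝ))) * x^2)) _]
    rw [integral_gaussian]
    -- now pure algebra
    have hs : Real.sqrt (π / ((1-2*t*(v:ℝ))/(2*(v:ℝ))))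
        = Real.sqrt (2*π*(v:ℝ)) * (Real.sqrt (1-2*t*(v:ℝ)))⁻¹ := by
      rw [← Real.sqrt_inv, ← Real.sqrt_mul (by positivity)]
      congr 1
      field_simp
    rw [hs]
    have hne : Real.sqrt (2*π*(v:ℝ)) ≠ 0 := by positivity
    field_simp

lemma aux_single {Ω : Type} [MeasureSpace Ω] {Y : Ω → ℝ} (hYm : Measurable Y)
    {v : ℝ≥0} (hY : Measure.map Y ℙ = gaussianReal 0 v) {t : ℝ} (hvt : 2*t*(v:ℝ) < 1) :
    Integrable (fun ω => Real.exp (t * (Y ω)^2)) ℙ ∧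
    ∫ ω, Real.exp (t * (Y ω)^2) ∂ℙ = (Real.sqrt (1-2*t*(v:ℝ)))⁻¹ := by
  have hg : Measurable (fun y : ℝ => Real.exp (t * (y+0)^2)) := by fun_prop
  have hint : Integrable (fun y => Real.exp (t*(y+0)^2)) (Measure.map Y ℙ) := by
    rw [hY]; exact aux_integrable v 0 hvt
  have hint' : Integrable (fun ω => Real.exp (t * (Y ω + 0)^2)) ℙ :=
    (integrable_map_measure hg.aestronglyMeasurable hYm.aemeasurable).mp hint
  have heq : ∫ ω, Real.exp (t * (Y ω + 0)^2) ∂ℙ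
      = ∫ y, Real.exp (t*(y+0)^2) ∂(Measure.map Y ℙ) :=
    (integral_map hYm.aemeasurable hg.aestronglyMeasurable).symm
  rw [hY, aux_integral v 0 hvt] at heq
  simp only [add_zero] at hint' heq
  refine ⟨hint', ?_⟩
  rw [heq]
  norm_num

lemma aux_pair {Ω : Type} [MeasureSpace Ω] [IsProbabilityMeasure (ℙ : Measure Ω)]
    {X Z : Ω → ℝ} (hXm : Measurable X) (hZm : Measurable Z)
    {v w : ℝ≥0} (hX : Measure.map X ℙ = gaussianReal 0 v) (hZ : Measure.map Z ℙ = gaussianReal 0 w)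
    (hind : IndepFun X Z ℙ) {t : ℝ} (ht : 0 ≤ t) (hvt : 2*t*((v:ℝ)+(w:ℝ)) < 1) :
    Integrable (fun ω => Real.exp (t * (X ω + Z ω)^2)) ℙ ∧
    ∫ ω, Real.exp (t * (X ω + Z ω)^2) ∂ℙ = (Real.sqrt (1-2*t*((v:ℝ)+(w:ℝ))))⁻¹ := by
  have hw0 : (0:ℝ) ≤ (w:ℝ) := w.coe_nonneg
  have hv0 : (0:ℝ) ≤ (v:ℝ) := v.coe_nonneg
  have htw : 2*t*(w:ℝ) < 1 := by nlinarith
  have h1w : (0:ℝ) < 1 - 2*t*(w:ℝ) := by linarith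
  set s : ℝ := t / (1 - 2*t*(w:ℝ)) with hs_def
  have hs0 : 0 ≤ s := div_nonneg ht h1w.le
  have hsv : 2*s*(v:ℝ) < 1 := by
    rw [hs_def, show 2*(t/(1-2*t*(w:ℝ)))*(v:ℝ) = (2*t*(v:ℝ))/(1-2*t*(w:ℝ)) by ring,
      div_lt_one h1w]
    nlinarith
  have h1sv : (0:ℝ) < 1 - 2*s*(v:ℝ) := by linarith
  -- the function on the product space
  set f : ℝ × ℝ → ℝ := fun p => Real.exp (t * (p.1 + p.2)^2) with hf_def
  have hfm : Measurable f := by fun_prop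
  have hmap : Measure.map (fun ω => (X ω, Z ω)) ℙ = (Measure.map X ℙ).prod (Measure.map Z ℙ) :=
    (indepFun_iff_map_prod_eq_prod_map_map hXm.aemeasurable hZm.aemeasurable).mp hind
  -- integrability on the product
  have hsect : ∀ x : ℝ, Integrable (fun z => f (x, z)) (Measure.map Z ℙ) := by
    intro x
    have : (fun z => f (x, z)) = fun z => Real.exp (t * (z + x)^2) := by
      funext z; simp only [hf_def]; ring_nf
    rw [this, hZ]
    exact aux_integrable w x htw
  have hsect_int : ∀ x : ℝ, ∫ z, f (x, z) ∂(Measure.map Z ℙ)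
      = (Real.sqrt (1-2*t*(w:ℝ)))⁻¹ * Real.exp (s * (x+0)^2) := by
    intro x
    have : (fun z => f (x, z)) = fun z => Real.exp (t * (z + x)^2) := by
      funext z; simp only [hf_def]; ring_nf
    rw [this, hZ, aux_integral w x htw]
    congr 1
    rw [add_zero]
    congr 1
    rw [hs_def]; ring
  have houter : Integrable (fun x => (Real.sqrt (1-2*t*(w:ℝ)))⁻¹ * Real.exp (s * (x+0)^2))
      (Measure.map X ℙ) := by
    rw [hX]
    exact (aux_integrable v 0 hsv).const_mul _
  have hprod : Integrable f ((Measure.map X ℙ).prod (Measure.map Z ℙ)) := by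
    have : IsProbabilityMeasure (Measure.map Z ℙ) := by rw [hZ]; infer_instance
    have : IsProbabilityMeasure (Measure.map X ℙ) := by rw [hX]; infer_instance
    rw [integrable_prod_iff hfm.aestronglyMeasurable]
    constructor
    · exact ae_of_all _ fun x => hsect x
    · have : (fun x => ∫ z, ‖f (x, z)‖ ∂(Measure.map Z ℙ))
          = fun x => (Real.sqrt (1-2*t*(w:ℝ)))⁻¹ * Real.exp (s * (x+0)^2) := by
        funext x
        rw [← hsect_int x]
        congr 1
        funext z
        rw [Real.norm_eq_abs, abs_of_pos (Real.exp_pos _)]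
      rw [this]
      exact houter
  have hint : Integrable (fun ω => f (X ω, Z ω)) ℙ := by
    have h := (integrable_map_measure hfm.aestronglyMeasurable
      (hXm.prodMk hZm).aemeasurable).mp (by rw [hmap]; exact hprod)
    exact h
  have hval : ∫ ω, f (X ω, Z ω) ∂ℙ = (Real.sqrt (1-2*t*((v:ℝ)+(w:ℝ))))⁻¹ := by
    have h0 : ∫ ω, f (X ω, Z ω) ∂ℙ = ∫ p, f p ∂(Measure.map (fun ω => (X ω, Z ω)) ℙ) :=
      (integral_map (hXm.prodMk hZm).aemeasurable hfm.aestronglyMeasurable).symm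
    rw [h0, hmap, integral_prod f hprod]
    have h2 : (fun x => ∫ z, f (x, z) ∂(Measure.map Z ℙ))
        = fun x => (Real.sqrt (1-2*t*(w:ℝ)))⁻¹ * Real.exp (s * (x+0)^2) := by
      funext x; exact hsect_int x
    rw [h2, integral_const_mul, hX, aux_integral v 0 hsv]
    have hprod_eq : (1-2*t*(w:ℝ)) * (1-2*s*(v:ℝ)) = 1-2*t*((v:ℝ)+(w:ℝ)) := by
      rw [hs_def]; field_simp; ring
    rw [← hprod_eq, Real.sqrt_mul h1w.le, mul_inv]
    norm_num
  exact ⟨hint, hval⟩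
lemma aux_group {Ω ι κ : Type*} [MeasurableSpace Ω] {μ : Measure Ω}
    [IsProbabilityMeasure μ] {f : ι → Ω → ℝ}
    (hindep : iIndepFun f μ)
    (hmeas : ∀ i, Measurable (f i)) (g : κ → Finset ι)
    (hdisj : ∀ k l, k ≠ l → Disjoint (g k) (g l))
    (W : κ → Ω → ℝ)
    (hW : ∀ k, ∃ φ : ((i : (g k : Finset ι)) → ℝ) → ℝ, Measurable φ ∧
        ∀ ω, W k ω = φ (fun i => f i ω)) :
    iIndepFun W μ := by
  classical
  rw [iIndepFun_iff_measure_inter_preimage_eq_mul]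
  intro S
  induction S using Finset.induction_on with
  | empty => intro sets _; simp
  | insert k S hk IH =>
    intro sets hsets
    rw [Finset.set_biInter_insert, Finset.prod_insert hk]
    obtain ⟨φ, hφm, hφ⟩ := hW k
    set T : Finset ι := S.biUnion g with hT
    have hdisjT : Disjoint (g k) T := by
      rw [hT, Finset.disjoint_biUnion_right]
      intro l hl
      exact hdisj k l (fun h => hk (h ▸ hl))
    have hIF : IndepFun (fun ω (i : (g k : Finset ι)) => f i ω)
        (fun ω (i : (T : Finset ι)) => f i ω) μ :=
      hindep.indepFun_finset (g k) T hdisjT hmeas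
    -- restriction maps
    have hsub : ∀ l ∈ S, ∀ i : ι, i ∈ g l → i ∈ T := by
      intro l hl i hi
      rw [hT, Finset.mem_biUnion]; exact ⟨l, hl, hi⟩
    -- W k ⁻¹' sets k as preimage under the tuple of g k
    have hWk : W k ⁻¹' sets k
        = (fun ω (i : (g k : Finset ι)) => f i ω) ⁻¹' (φ ⁻¹' sets k) := by
      ext ω; simp [hφ ω]
    -- the other intersection as preimage under the tuple of T
    have hrest : ∀ l ∈ S, ∃ ψ : ((i : (T : Finset ι)) → ℝ) → ℝ, Measurable ψ ∧
        ∀ ω, W l ω = ψ (fun i => f i ω) := by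
      intro l hl
      obtain ⟨ψ, hψm, hψ⟩ := hW l
      refine ⟨fun p => ψ (fun i => p ⟨i.1, hsub l hl i.1 i.2⟩), ?_, ?_⟩
      · exact hψm.comp (measurable_pi_lambda _ fun i => measurable_pi_apply _)
      · intro ω; exact hψ ω
    choose ψ hψm hψ using hrest
    have hB : (⋂ l ∈ S, W l ⁻¹' sets l)
        = (fun ω (i : (T : Finset ι)) => f i ω) ⁻¹'
          (⋂ l ∈ S.attach, ψ l.1 l.2 ⁻¹' sets l.1) := by
      ext ω
      simp only [Set.mem_iInter, Set.mem_preimage, Finset.mem_attach, Set.preimage_iInter]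
      constructor
      · rintro h ⟨l, hl⟩ -
        simp only [Set.mem_preimage, ← hψ l hl ω]
        exact h l hl
      · intro h l hl
        have := h ⟨l, hl⟩ trivial
        simpa only [Set.mem_preimage, ← hψ l hl ω] using this
    rw [hWk, hB]
    have hsetk : MeasurableSet (sets k) := hsets k (Finset.mem_insert_self k S)
    have hmeasB : MeasurableSet (⋂ l ∈ S.attach, ψ l.1 l.2 ⁻¹' sets l.1) :=
      Set.Finite.measurableSet_biInter (Set.toFinite _)
        (fun l _ => (hψm l.1 l.2) (hsets l.1 (Finset.mem_insert_of_mem l.2)))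
    have := hIF.meas_inter (s := (fun ω (i : (g k : Finset ι)) => f i ω) ⁻¹' (φ ⁻¹' sets k))
      (t := (fun ω (i : (T : Finset ι)) => f i ω) ⁻¹' (⋂ l ∈ S.attach, ψ l.1 l.2 ⁻¹' sets l.1))
      ⟨_, hφm hsetk, rfl⟩ ⟨_, hmeasB, rfl⟩
    rw [this, ← hB, IH (fun i hi => hsets i (Finset.mem_insert_of_mem hi)), ← hWk]

lemma aux_reindex {M : Type*} [AddCommMonoid M] {n₁ n₂ : ℕ} (hn : n₂ ≤ n₁) (F : Fin n₁ → M) :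
    ∑ j ∈ Finset.univ.filter (fun j : Fin n₁ => (j:ℕ) < n₂), F j
      = ∑ i : Fin n₂, F (Fin.castLE hn i) := by
  refine Finset.sum_bij' (fun j hj => (⟨(j:ℕ), by simpa using hj⟩ : Fin n₂))
    (fun i _ => Fin.castLE hn i) ?_ ?_ ?_ ?_ ?_
  · intro a ha; exact Finset.mem_univ _
  · intro a ha; simp [Fin.is_lt]
  · intro a ha; simp
  · intro a ha; simp
  · intro a ha; rfl

set_option maxHeartbeats 1000000 in
/-- Lemma 1, first assertion (22): under the sum power budget
`n₂(P₁₁+P₂) + (n₁-n₂)P₁₂ ≤ n₁ P_T`, independent Gaussian codewords generated with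
power backoff `δ` satisfy
`ℙ(Σ_{j≤n₂} (X₁ⱼ+X₂ⱼ)² + Σ_{j>n₂} X₁ⱼ² > n₁ P_T) ≤ C exp(-c n₂)`. -/
theorem sum_power_constraint_violation_exponential_bound
    (δ PT P₁₁ P₁₂ P₂ : ℝ) (hδ : 0 < δ)
    (hPT : 0 ≤ PT) (hP₁₁ : 0 ≤ P₁₁ - δ) (hP₁₂ : 0 ≤ P₁₂ - δ) (hP₂ : 0 ≤ P₂ - δ) :
    ∃ c C : ℝ, 0 < c ∧ 0 ≤ C ∧
      ∀ (n₁ n₂ : ℕ) (hn₂ : 1 ≤ n₂) (hn : n₂ ≤ n₁),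
        (n₂ : ℝ) * (P₁₁ + P₂) + ((n₁ : ℝ) - n₂) * P₁₂ ≤ (n₁ : ℝ) * PT →
        ∀ (Ω : Type) (_ : MeasureSpace Ω) (_ : IsProbabilityMeasure (ℙ : Measure Ω))
          (X₁ : Fin n₁ → Ω → ℝ) (X₂ : Fin n₂ → Ω → ℝ),
          (∀ j, Measurable (X₁ j)) → (∀ j, Measurable (X₂ j)) →
          iIndepFun (Sum.elim X₁ X₂) ℙ →
          (∀ j : Fin n₁, (j : ℕ) < n₂ →
            Measure.map (X₁ j) ℙ = gaussianReal 0 (P₁₁ - δ).toNNReal) →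
          (∀ j : Fin n₁, n₂ ≤ (j : ℕ) →
            Measure.map (X₁ j) ℙ = gaussianReal 0 (P₁₂ - δ).toNNReal) →
          (∀ j : Fin n₂, Measure.map (X₂ j) ℙ = gaussianReal 0 (P₂ - δ).toNNReal) →
          (ℙ {ω | (n₁ : ℝ) * PT <
              (∑ j : Fin n₂, (X₁ (Fin.castLE hn j) ω + X₂ j ω) ^ 2) +
              ∑ j ∈ Finset.univ.filter (fun j : Fin n₁ => n₂ ≤ (j : ℕ)),
                X₁ j ω ^ 2}).toReal ≤
            C * Real.exp (-c * n₂) := by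
  classical
  set V : ℝ := (P₁₁ - δ) + (P₂ - δ) + (P₁₂ - δ) + 1 with hV_def
  have hV0 : (0:ℝ) < V := by nlinarith
  set t : ℝ := min (δ/(4*V^2)) (1/(8*V)) with ht_def
  have ht0 : 0 < t := lt_min (by positivity) (by positivity)
  have ht1 : 4*t*V^2 ≤ δ := by
    have h := min_le_left (δ/(4*V^2)) (1/(8*V))
    rw [← ht_def] at h
    have := (le_div_iff₀ (by positivity : (0:ℝ) < 4*V^2)).mp h
    linarith
  have ht2 : 8*V*t ≤ 1 := by
    have h := min_le_right (δ/(4*V^2)) (1/(8*V))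
    rw [← ht_def] at h
    have := (le_div_iff₀ (by positivity : (0:ℝ) < 8*V)).mp h
    linarith
  have hsmall : ∀ x : ℝ, 0 ≤ x → x ≤ V → 2*t*x ≤ 1/4 := by
    intro x h0 h1
    nlinarith [mul_le_mul_of_nonneg_left h1 ht0.le]
  have hbound : ∀ x : ℝ, 0 ≤ x → x ≤ V →
      (Real.sqrt (1-2*t*x))⁻¹ ≤ Real.exp (t*x + 4*t^2*x^2) := by
    intro x h0 h1
    have h2 : 2*t*x ≤ 1/2 := le_trans (hsmall x h0 h1) (by norm_num)
    have := aux_inv_sqrt_le_exp (u := 2*t*x) (by positivity) h2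
    convert this using 2
    ring
  refine ⟨t*δ, 1, by positivity, zero_le_one, ?_⟩
  intro n₁ n₂ hn₂ hn hbudget Ω mΩ hprob X₁ X₂ hX₁m hX₂m hindep hG11 hG12 hG2
  haveI := hprob
  set v₁ : ℝ≥0 := (P₁₁ - δ).toNNReal with hv₁_def
  set v₂ : ℝ≥0 := (P₂ - δ).toNNReal with hv₂_def
  set v₃ : ℝ≥0 := (P₁₂ - δ).toNNReal with hv₃_def
  have hcv₁ : (v₁:ℝ) = P₁₁ - δ := Real.coe_toNNReal _ hP₁₁
  have hcv₂ : (v₂:ℝ) = P₂ - δ := Real.coe_toNNReal _ hP₂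
  have hcv₃ : (v₃:ℝ) = P₁₂ - δ := Real.coe_toNNReal _ hP₁₂
  have hu₁V : (v₁:ℝ) + (v₂:ℝ) ≤ V := by rw [hcv₁, hcv₂, hV_def]; linarith
  have hu₂V : (v₃:ℝ) ≤ V := by rw [hcv₃, hV_def]; linarith
  have hu₁0 : (0:ℝ) ≤ (v₁:ℝ) + (v₂:ℝ) := by positivity
  have hu₂0 : (0:ℝ) ≤ (v₃:ℝ) := by positivity
  have hcond₁ : 2*t*((v₁:ℝ)+(v₂:ℝ)) < 1 := lt_of_le_of_lt (hsmall _ hu₁0 hu₁V) (by norm_num)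
  have hcond₂ : 2*t*(v₃:ℝ) < 1 := lt_of_le_of_lt (hsmall _ hu₂0 hu₂V) (by norm_num)
  -- the grouped variables
  set W : Fin n₁ → Ω → ℝ := fun j ω =>
    if h : (j:ℕ) < n₂ then (X₁ j ω + X₂ ⟨(j:ℕ), h⟩ ω)^2 else (X₁ j ω)^2 with hW_def
  set u : Fin n₁ → ℝ := fun j => if (j:ℕ) < n₂ then (v₁:ℝ)+(v₂:ℝ) else (v₃:ℝ) with hu_def
  have hWm : ∀ j, Measurable (W j) := by
    intro j
    rw [hW_def]
    by_cases h : (j:ℕ) < n₂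
    · simp only [dif_pos h]
      exact ((hX₁m j).add (hX₂m _)).pow_const 2
    · simp only [dif_neg h]
      exact (hX₁m j).pow_const 2
  have hfm : ∀ i : Fin n₁ ⊕ Fin n₂, Measurable (Sum.elim X₁ X₂ i) := by
    rintro (j|j)
    exacts [hX₁m j, hX₂m j]
  -- independence of the grouped variables
  have hWindep : iIndepFun W ℙ := by
    refine aux_group hindep hfm
      (fun j : Fin n₁ => if h : (j:ℕ) < n₂
        then {Sum.inl j, Sum.inr ⟨(j:ℕ), h⟩} else {Sum.inl j}) ?_ W ?_
    · have hmem : ∀ (j : Fin n₁) (a : Fin n₁ ⊕ Fin n₂),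
          a ∈ (if h : (j:ℕ) < n₂ then ({Sum.inl j, Sum.inr ⟨(j:ℕ),h⟩} :
              Finset (Fin n₁ ⊕ Fin n₂)) else {Sum.inl j}) →
          a = Sum.inl j ∨ ∃ hj : (j:ℕ) < n₂, a = Sum.inr ⟨(j:ℕ), hj⟩ := by
        intro j a ha
        by_cases h : (j:ℕ) < n₂
        · rw [dif_pos h] at ha
          rcases Finset.mem_insert.mp ha with rfl | ha'
          · exact Or.inl rfl
          · exact Or.inr ⟨h, Finset.mem_singleton.mp ha'⟩
        · rw [dif_neg h] at ha
          exact Or.inl (Finset.mem_singleton.mp ha)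
      intro k l hkl
      rw [Finset.disjoint_left]
      intro a hak hal
      rcases hmem k a hak with rfl | ⟨hk1, rfl⟩ <;> rcases hmem l _ hal with he | ⟨hl1, he⟩
      · exact hkl (Sum.inl.inj he)
      · exact Sum.inl_ne_inr he
      · exact Sum.inr_ne_inl he
      · exact hkl (Fin.ext (by simpa using he))
    · intro k
      by_cases h : (k:ℕ) < n₂
      · refine ⟨fun p => (p ⟨Sum.inl k, by simp [dif_pos h]⟩
          + p ⟨Sum.inr ⟨(k:ℕ), h⟩, by simp [dif_pos h]⟩)^2, ?_, ?_⟩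
        · fun_prop
        · intro ω
          simp only [hW_def, dif_pos h]
          rfl
      · refine ⟨fun p => (p ⟨Sum.inl k, by simp [dif_neg h]⟩)^2, ?_, ?_⟩
        · fun_prop
        · intro ω
          simp only [hW_def, dif_neg h]
          rfl
  -- per-coordinate integrability and mgf value
  have hmgf : ∀ j : Fin n₁, Integrable (fun ω => Real.exp (t * W j ω)) ℙ ∧
      (∫ ω, Real.exp (t * W j ω) ∂ℙ) = (Real.sqrt (1-2*t*(u j)))⁻¹ := by
    intro j
    by_cases h : (j:ℕ) < n₂
    · have hind : IndepFun (X₁ j) (X₂ ⟨(j:ℕ), h⟩) ℙ :=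
        hindep.indepFun (show (Sum.inl j : Fin n₁ ⊕ Fin n₂) ≠ Sum.inr ⟨(j:ℕ),h⟩ by simp)
      have hp := aux_pair (hX₁m j) (hX₂m ⟨(j:ℕ),h⟩) (hG11 j h) (hG2 ⟨(j:ℕ),h⟩) hind
        ht0.le hcond₁
      have hWj : W j = fun ω => (X₁ j ω + X₂ ⟨(j:ℕ),h⟩ ω)^2 := by
        funext ω; simp only [hW_def]; rw [dif_pos h]
      have huj : u j = (v₁:ℝ)+(v₂:ℝ) := by simp only [hu_def]; rw [if_pos h]
      rw [hWj, huj]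
      exact hp
    · have hp := aux_single (hX₁m j) (hG12 j (not_lt.mp h)) hcond₂
      have hWj : W j = fun ω => (X₁ j ω)^2 := by
        funext ω; simp only [hW_def]; rw [dif_neg h]
      have huj : u j = (v₃:ℝ) := by simp only [hu_def]; rw [if_neg h]
      rw [hWj, huj]
      exact hp
  have hmgf' : ∀ j : Fin n₁, mgf (W j) ℙ t = (Real.sqrt (1-2*t*(u j)))⁻¹ := fun j => (hmgf j).2
  have hu0V : ∀ j : Fin n₁, 0 ≤ u j ∧ u j ≤ V := by
    intro j
    simp only [hu_def]
    by_cases h : (j:ℕ) < n₂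
    · rw [if_pos h]; exact ⟨hu₁0, hu₁V⟩
    · rw [if_neg h]; exact ⟨hu₂0, hu₂V⟩
  -- Chernoff bound
  have hS_int : Integrable (fun ω => Real.exp (t * (∑ j, W j) ω)) ℙ :=
    hWindep.integrable_exp_mul_sum hWm (fun j _ => (hmgf j).1)
  have hchern := measure_ge_le_exp_mul_mgf (X := ∑ j, W j) (μ := ℙ) ((n₁:ℝ)*PT) ht0.le hS_int
  rw [hWindep.mgf_sum hWm] at hchern
  -- event inclusion
  have hsub : {ω | (n₁ : ℝ) * PT <
      (∑ j : Fin n₂, (X₁ (Fin.castLE hn j) ω + X₂ j ω) ^ 2) +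
      ∑ j ∈ Finset.univ.filter (fun j : Fin n₁ => n₂ ≤ (j : ℕ)), X₁ j ω ^ 2}
      ⊆ {ω | (n₁:ℝ)*PT ≤ (∑ j, W j) ω} := by
    intro ω hω
    have hsum : (∑ j, W j) ω = (∑ j : Fin n₂, (X₁ (Fin.castLE hn j) ω + X₂ j ω) ^ 2) +
        ∑ j ∈ Finset.univ.filter (fun j : Fin n₁ => n₂ ≤ (j : ℕ)), X₁ j ω ^ 2 := by
      rw [Finset.sum_apply]
      rw [← Finset.sum_filter_add_sum_filter_not Finset.univ (fun j : Fin n₁ => (j:ℕ) < n₂)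
        (fun j => W j ω)]
      congr 1
      · rw [aux_reindex hn (fun j => W j ω)]
        refine Finset.sum_congr rfl fun i _ => ?_
        have hlt : ((Fin.castLE hn i : Fin n₁) : ℕ) < n₂ := i.2
        simp only [hW_def]
        rw [dif_pos hlt]
        rfl
      · have hfe : Finset.univ.filter (fun j : Fin n₁ => ¬(j:ℕ) < n₂)
            = Finset.univ.filter (fun j : Fin n₁ => n₂ ≤ (j:ℕ)) := by
          ext j; simp [not_lt]
        rw [hfe]
        refine Finset.sum_congr rfl fun j hj => ?_
        have hj2 := (Finset.mem_filter.mp hj).2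
        simp only [hW_def]
        rw [dif_neg (not_lt.mpr hj2)]
    have hlt2 : (n₁:ℝ)*PT < (∑ j, W j) ω := by rw [hsum]; exact hω
    exact hlt2.le
  -- cardinalities
  have hcard1 : (Finset.univ.filter (fun j : Fin n₁ => (j:ℕ) < n₂)).card = n₂ := by
    rw [Finset.card_eq_sum_ones, aux_reindex (M := ℕ) hn (fun _ => (1:ℕ))]
    simp
  have hcard2 : (Finset.univ.filter (fun j : Fin n₁ => ¬(j:ℕ) < n₂)).card = n₁ - n₂ := by
    have h := Finset.card_filter_add_card_filter_not
      (s := (Finset.univ : Finset (Fin n₁))) (p := fun j : Fin n₁ => (j:ℕ) < n₂)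
    rw [Finset.card_univ, Fintype.card_fin, hcard1] at h
    omega
  -- sum of exponents
  have hexps : ∑ j : Fin n₁, (t * u j + 4*t^2*(u j)^2)
      = (n₂:ℝ) * (t*((v₁:ℝ)+(v₂:ℝ)) + 4*t^2*((v₁:ℝ)+(v₂:ℝ))^2)
        + ((n₁:ℝ)-(n₂:ℝ)) * (t*(v₃:ℝ) + 4*t^2*(v₃:ℝ)^2) := by
    rw [← Finset.sum_filter_add_sum_filter_not Finset.univ (fun j : Fin n₁ => (j:ℕ) < n₂)
      (fun j => t * u j + 4*t^2*(u j)^2)]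
    congr 1
    · rw [Finset.sum_congr rfl (fun j hj => ?_), Finset.sum_const, hcard1, nsmul_eq_mul]
      have hj2 := (Finset.mem_filter.mp hj).2
      have huj : u j = (v₁:ℝ)+(v₂:ℝ) := by simp only [hu_def]; rw [if_pos hj2]
      rw [huj]
    · rw [Finset.sum_congr rfl (fun j hj => ?_), Finset.sum_const, hcard2, nsmul_eq_mul,
        Nat.cast_sub hn]
      have hj2 := (Finset.mem_filter.mp hj).2
      have huj : u j = (v₃:ℝ) := by simp only [hu_def]; rw [if_neg hj2]
      rw [huj]
  -- quadratic absorption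
  have hq1 : 4*t^2*((v₁:ℝ)+(v₂:ℝ))^2 ≤ t*δ := by
    nlinarith [mul_le_mul_of_nonneg_left ht1 ht0.le, sq_nonneg ((v₁:ℝ)+(v₂:ℝ)),
      mul_le_mul hu₁V hu₁V hu₁0 hV0.le, sq_nonneg t]
  have hq2 : 4*t^2*(v₃:ℝ)^2 ≤ t*δ := by
    nlinarith [mul_le_mul_of_nonneg_left ht1 ht0.le, sq_nonneg (v₃:ℝ),
      mul_le_mul hu₂V hu₂V hu₂0 hV0.le, sq_nonneg t]
  have hn₂0 : (0:ℝ) ≤ (n₂:ℝ) := Nat.cast_nonneg _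
  have hd0 : (0:ℝ) ≤ (n₁:ℝ) - (n₂:ℝ) := by
    have : (n₂:ℝ) ≤ (n₁:ℝ) := Nat.cast_le.mpr hn
    linarith
  -- final chain
  calc (ℙ {ω | (n₁ : ℝ) * PT <
          (∑ j : Fin n₂, (X₁ (Fin.castLE hn j) ω + X₂ j ω) ^ 2) +
          ∑ j ∈ Finset.univ.filter (fun j : Fin n₁ => n₂ ≤ (j : ℕ)), X₁ j ω ^ 2}).toReal
      ≤ (ℙ {ω | (n₁:ℝ)*PT ≤ (∑ j, W j) ω}).toReal :=
        ENNReal.toReal_mono (measure_ne_top _ _) (measure_mono hsub)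
    _ ≤ Real.exp (-t*((n₁:ℝ)*PT)) * ∏ j, mgf (W j) ℙ t := hchern
    _ ≤ Real.exp (-t*((n₁:ℝ)*PT)) * ∏ j, Real.exp (t * u j + 4*t^2*(u j)^2) := by
        refine mul_le_mul_of_nonneg_left (Finset.prod_le_prod (fun j _ => mgf_nonneg)
          (fun j _ => ?_)) (Real.exp_pos _).le
        rw [hmgf' j]
        exact hbound (u j) (hu0V j).1 (hu0V j).2
    _ = Real.exp (-t*((n₁:ℝ)*PT) + ∑ j : Fin n₁, (t * u j + 4*t^2*(u j)^2)) := by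
        rw [← Real.exp_sum, ← Real.exp_add]
    _ ≤ Real.exp (-(t*δ)*(n₂:ℝ)) := by
        rw [Real.exp_le_exp, hexps, hcv₁, hcv₂, hcv₃]
        rw [hcv₁, hcv₂] at hq1
        rw [hcv₃] at hq2
        nlinarith [mul_le_mul_of_nonneg_left hbudget ht0.le,
          mul_le_mul_of_nonneg_left hq1 hn₂0, mul_le_mul_of_nonneg_left hq2 hd0]
    _ = 1 * Real.exp (-(t*δ)*(n₂:ℝ)) := (one_mul _).symm
end

section
/- Fix δ > 0 and nonnegative reals P_T, P₁₁, P₁₂, P₂ with P̄₁₁ := P₁₁ − δ ≥ 0, P̄₁₂ := P₁₂ − δ ≥ 0, P̄₂ := P₂ − δ ≥ 0. There exist constants c > 0 and C ≥ 0, depending only on δ, P_T, P₁₁, P₁₂, P₂, such that the following holds: for all integers n₁ ≥ n₂ ≥ 1 satisfying n₂·(P₁₁ + P₂) + (n₁ − n₂)·P₁₂ ≤ n₁·P_T, and for any mutually independent real random variables X_{1,1},…,X_{1,n₁}, X_{2,1},…,X_{2,n₂} on a probability space (Ω, 𝒜, ℙ) with X_{1,j} distributed as N(0, P̄₁₁)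 for 1 ≤ j ≤ n₂, X_{1,j} distributed as N(0, P̄₁₂) for n₂ < j ≤ n₁, and X_{2,j} distributed as N(0, P̄₂) for 1 ≤ j ≤ n₂, one has ℙ( Σ_{j=1}^{n₂} (X_{1,j}² + X_{2,j}²) + Σ_{j=n₂+1}^{n₁} X_{1,j}² > n₁·P_T ) ≤ C·exp(−c·n₂). -/
open MeasureTheory ProbabilityTheory Real
open scoped NNReal ENNReal

lemma aux_gauss_exp_sq (v : ℝ≥0) {t : ℝ} (ht : 2 * t * (v : ℝ) < 1) :
    Integrable (fun x : ℝ => Real.exp (t * x ^ 2)) (gaussianReal 0 v) ∧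
      ∫ x, Real.exp (t * x ^ 2) ∂(gaussianReal 0 v) = (Real.sqrt (1 - 2 * t * (v : ℝ)))⁻¹ := by
  rcases eq_or_ne v 0 with rfl | hv
  · rw [gaussianReal_zero_var]
    constructor
    · constructor
      · exact ((continuous_exp.comp (continuous_const.mul (continuous_pow 2)))).aestronglyMeasurable
      · rw [HasFiniteIntegral, lintegral_dirac]
        exact ENNReal.coe_lt_top
    · simp
  · have hv0 : (0 : ℝ) < (v : ℝ) := by positivity
    set b : ℝ := (2 * (v : ℝ))⁻¹ - t with hb_def
    have hb : 0 < b := by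
      have h2v : (0 : ℝ) < 2 * (v : ℝ) := by positivity
      have h1 : t < 1 / (2 * (v : ℝ)) := (lt_div_iff₀ h2v).mpr (by linarith)
      rw [hb_def, sub_pos, ← one_div]
      exact h1
    have hmeas : Measurable fun x : ℝ => (gaussianPDFReal 0 v x).toNNReal :=
      (measurable_gaussianPDFReal 0 v).real_toNNReal
    have hwd : gaussianReal 0 v
        = (volume : Measure ℝ).withDensity (fun x => ((gaussianPDFReal 0 v x).toNNReal : ℝ≥0∞)) := by
      rw [gaussianReal_of_var_ne_zero 0 hv]
      rfl
    have hpt : ∀ x : ℝ, (gaussianPDFReal 0 v x).toNNReal • Real.exp (t * x ^ 2)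
        = (Real.sqrt (2 * π * (v : ℝ)))⁻¹ * Real.exp (-b * x ^ 2) := by
      intro x
      have hnn : 0 ≤ gaussianPDFReal 0 v x := gaussianPDFReal_nonneg 0 v x
      rw [NNReal.smul_def, smul_eq_mul, Real.coe_toNNReal _ hnn, gaussianPDFReal]
      rw [mul_assoc, ← Real.exp_add]
      congr 1
      have h2v : (2 : ℝ) * (v : ℝ) ≠ 0 := by positivity
      rw [hb_def]
      ring
    have hint' : Integrable (fun x : ℝ => (gaussianPDFReal 0 v x).toNNReal • Real.exp (t * x ^ 2))
        (volume : Measure ℝ) := by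
      simp_rw [hpt]
      exact (integrable_exp_neg_mul_sq hb).const_mul _
    constructor
    · rw [hwd]
      exact (integrable_withDensity_iff_integrable_smul hmeas).mpr hint'
    · rw [hwd, integral_withDensity_eq_integral_smul hmeas]
      simp_rw [hpt]
      rw [integral_const_mul, integral_gaussian]
      rw [← Real.sqrt_inv, ← Real.sqrt_mul (by positivity)]
      congr 1
      have hbne : b ≠ 0 := hb.ne'
      have hkey : 1 - 2 * t * (v : ℝ) = 2 * (v : ℝ) * b := by
        rw [hb_def, mul_sub, mul_inv_cancel₀ (by positivity : (2 * (v : ℝ)) ≠ 0)]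
        ring
      rw [hkey]
      rw [← Real.sqrt_inv]
      congr 1
      have hπ : π ≠ 0 := Real.pi_ne_zero
      field_simp

lemma aux_sum_fin_split {M : Type*} [AddCommMonoid M] {n₁ n₂ : ℕ} (hn : n₂ ≤ n₁) (f : Fin n₁ → M) :
    ∑ j : Fin n₁, f j = (∑ j : Fin n₂, f (Fin.castLE hn j)) +
      ∑ j ∈ Finset.univ.filter (fun j : Fin n₁ => n₂ ≤ (j : ℕ)), f j := by
  classical
  rw [← Finset.sum_filter_add_sum_filter_not Finset.univ (fun j : Fin n₁ => (j : ℕ) < n₂) f]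
  congr 1
  · refine (Finset.sum_bij' (fun (a : Fin n₁) (ha : a ∈ Finset.univ.filter
        (fun j : Fin n₁ => (j : ℕ) < n₂)) => (⟨(a : ℕ), (Finset.mem_filter.mp ha).2⟩ : Fin n₂))
      (fun (a : Fin n₂) _ => Fin.castLE hn a) ?_ ?_ ?_ ?_ ?_)
    · intro a ha; exact Finset.mem_univ _
    · intro a _; simp [Fin.is_lt a]
    · intro a ha; rfl
    · intro a ha; rfl
    · intro a ha; rfl
  · apply Finset.sum_congr
    · ext j; simp [not_lt]
    · intros; rfl

lemma aux_sqrt_bound {t v d : ℝ} (ht : 0 ≤ t) (hv : 0 ≤ v) (hd : 0 < d)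
    (h1 : 2 * t * v < 1) (h2 : t * (4 * v ^ 2 + 2 * v * d) ≤ d) :
    (Real.sqrt (1 - 2 * t * v))⁻¹ ≤ Real.exp (t * v + t * d / 2) := by
  have hs : 0 < 1 - 2 * t * v := by linarith
  have hx : 0 ≤ 2 * t * v + t * d := by positivity
  have key : Real.exp (-(2 * t * v + t * d)) ≤ 1 - 2 * t * v := by
    have h3 : (2 * t * v + t * d) + 1 ≤ Real.exp (2 * t * v + t * d) := Real.add_one_le_exp _
    have hpos : (0 : ℝ) < 1 + (2 * t * v + t * d) := by linarith
    have h4 : (1 + (2 * t * v + t * d))⁻¹ ≤ 1 - 2 * t * v := by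
      rw [inv_le_iff_one_le_mul₀ hpos]
      nlinarith
    calc Real.exp (-(2 * t * v + t * d)) = (Real.exp (2 * t * v + t * d))⁻¹ := Real.exp_neg _
      _ ≤ (1 + (2 * t * v + t * d))⁻¹ := by
          apply inv_anti₀ hpos; linarith
      _ ≤ 1 - 2 * t * v := h4
  have key2 : Real.exp (-(t * v + t * d / 2)) ≤ Real.sqrt (1 - 2 * t * v) := by
    have : Real.exp (-(t * v + t * d / 2)) = Real.sqrt (Real.exp (-(2 * t * v + t * d))) := by
      rw [← Real.exp_half]; congr 1; ring
    rw [this]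
    exact Real.sqrt_le_sqrt key
  calc (Real.sqrt (1 - 2 * t * v))⁻¹ ≤ (Real.exp (-(t * v + t * d / 2)))⁻¹ := by
        apply inv_anti₀ (Real.exp_pos _) key2
    _ = Real.exp (t * v + t * d / 2) := by rw [← Real.exp_neg, neg_neg]

lemma aux_mgf_sq {Ω : Type} [MeasureSpace Ω] {X : Ω → ℝ} (hX : Measurable X) {v : ℝ≥0}
    (hmap : Measure.map X ℙ = gaussianReal 0 v) {t : ℝ} (ht : 2 * t * (v : ℝ) < 1) :
    Integrable (fun ω => Real.exp (t * (X ω ^ 2))) ℙ ∧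
      mgf (fun ω => X ω ^ 2) ℙ t = (Real.sqrt (1 - 2 * t * (v : ℝ)))⁻¹ := by
  obtain ⟨hint, hI⟩ := aux_gauss_exp_sq v ht
  have hg : AEStronglyMeasurable (fun x : ℝ => Real.exp (t * x ^ 2)) (Measure.map X ℙ) :=
    (continuous_exp.comp (continuous_const.mul (continuous_pow 2))).aestronglyMeasurable
  constructor
  · have := (integrable_map_measure hg hX.aemeasurable).mp (by rw [hmap]; exact hint)
    exact this
  · rw [mgf]
    have : ∫ ω, Real.exp (t * (X ω ^ 2)) ∂(ℙ : Measure Ω)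
        = ∫ x, Real.exp (t * x ^ 2) ∂(Measure.map X ℙ) :=
      (integral_map hX.aemeasurable hg).symm
    rw [this, hmap, hI]

/-- Lemma 1, second assertion (23): under the sum power budget
`n₂(P₁₁+P₂) + (n₁-n₂)P₁₂ ≤ n₁ P_T`, independent Gaussian codewords generated with
power backoff `δ` satisfy
`ℙ(Σ_{j≤n₂} (X₁ⱼ²+X₂ⱼ²) + Σ_{j>n₂} X₁ⱼ² > n₁ P_T) ≤ C exp(-c n₂)`. -/
theorem modified_sum_power_constraint_violation_exponential_bound
    (δ PT P₁₁ P₁₂ P₂ : ℝ) (hδ : 0 < δ)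
    (hPT : 0 ≤ PT) (hP₁₁ : 0 ≤ P₁₁ - δ) (hP₁₂ : 0 ≤ P₁₂ - δ) (hP₂ : 0 ≤ P₂ - δ) :
    ∃ c C : ℝ, 0 < c ∧ 0 ≤ C ∧
      ∀ (n₁ n₂ : ℕ) (hn₂ : 1 ≤ n₂) (hn : n₂ ≤ n₁),
        (n₂ : ℝ) * (P₁₁ + P₂) + ((n₁ : ℝ) - n₂) * P₁₂ ≤ (n₁ : ℝ) * PT →
        ∀ (Ω : Type) (_ : MeasureSpace Ω) (_ : IsProbabilityMeasure (ℙ : Measure Ω))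
          (X₁ : Fin n₁ → Ω → ℝ) (X₂ : Fin n₂ → Ω → ℝ),
          (∀ j, Measurable (X₁ j)) → (∀ j, Measurable (X₂ j)) →
          iIndepFun (Sum.elim X₁ X₂) ℙ →
          (∀ j : Fin n₁, (j : ℕ) < n₂ →
            Measure.map (X₁ j) ℙ = gaussianReal 0 (P₁₁ - δ).toNNReal) →
          (∀ j : Fin n₁, n₂ ≤ (j : ℕ) →
            Measure.map (X₁ j) ℙ = gaussianReal 0 (P₁₂ - δ).toNNReal) →
          (∀ j : Fin n₂, Measure.map (X₂ j) ℙ = gaussianReal 0 (P₂ - δ).toNNReal) →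
          (ℙ {ω | (n₁ : ℝ) * PT <
              (∑ j : Fin n₂, (X₁ (Fin.castLE hn j) ω ^ 2 + X₂ j ω ^ 2)) +
              ∑ j ∈ Finset.univ.filter (fun j : Fin n₁ => n₂ ≤ (j : ℕ)),
                X₁ j ω ^ 2}).toReal ≤
            C * Real.exp (-c * n₂) := by
  classical
  set V : ℝ := max P₁₁ (max P₁₂ P₂) with hV_def
  have hδP₁₁ : δ ≤ P₁₁ := by linarith
  have hV : 0 < V := lt_of_lt_of_le hδ (le_trans hδP₁₁ (le_max_left _ _))
  set t : ℝ := δ / (4 * V ^ 2 + 2 * V * δ + 1) with ht_def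
  have hD : (0 : ℝ) < 4 * V ^ 2 + 2 * V * δ + 1 := by positivity
  have ht0 : 0 < t := div_pos hδ hD
  have htD : t * (4 * V ^ 2 + 2 * V * δ + 1) = δ := div_mul_cancel₀ _ hD.ne'
  -- per-variance smallness
  have htV : ∀ w : ℝ, 0 ≤ w → w ≤ V → 2 * t * w < 1 ∧ t * (4 * w ^ 2 + 2 * w * δ) ≤ δ := by
    intro w h0 h1
    constructor
    · nlinarith [mul_pos ht0 hV, sq_nonneg V, mul_pos hδ hV, mul_nonneg ht0.le h0]
    · have hq : 4 * w ^ 2 + 2 * w * δ ≤ 4 * V ^ 2 + 2 * V * δ := by nlinarith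
      linarith [mul_le_mul_of_nonneg_left hq ht0.le]
  refine ⟨t * δ, 1, by positivity, zero_le_one, ?_⟩
  intro n₁ n₂ hn₂ hn hbudget Ω mΩ hprob X₁ X₂ hmX₁ hmX₂ hindep h11 h12 h2
  -- the combined family and its squares
  set X : Fin n₁ ⊕ Fin n₂ → Ω → ℝ := Sum.elim X₁ X₂ with hX_def
  have hmX : ∀ i, Measurable (X i) := by rintro (j | j); exacts [hmX₁ j, hmX₂ j]
  set Z : Fin n₁ ⊕ Fin n₂ → Ω → ℝ := fun i ω => X i ω ^ 2 with hZ_def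
  have hmZ : ∀ i, Measurable (Z i) := fun i => (hmX i).pow_const 2
  have hindepZ : iIndepFun Z ℙ :=
    hindep.comp (fun _ (x : ℝ) => x ^ 2) (fun _ => measurable_id.pow_const 2)
  -- variances
  set w : Fin n₁ ⊕ Fin n₂ → ℝ≥0 := Sum.elim
      (fun j : Fin n₁ => if (j : ℕ) < n₂ then (P₁₁ - δ).toNNReal else (P₁₂ - δ).toNNReal)
      (fun _ => (P₂ - δ).toNNReal) with hw_def
  have hmapi : ∀ i, Measure.map (X i) ℙ = gaussianReal 0 (w i) := by
    rintro (j | j)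
    · by_cases hj : (j : ℕ) < n₂
      · simp only [hX_def, hw_def, Sum.elim_inl, if_pos hj]; exact h11 j hj
      · simp only [hX_def, hw_def, Sum.elim_inl, if_neg hj]; exact h12 j (not_lt.mp hj)
    · simp only [hX_def, hw_def, Sum.elim_inr]; exact h2 j
  have hwV : ∀ i, ((w i : ℝ≥0) : ℝ) ≤ V := by
    rintro (j | j)
    · by_cases hj : (j : ℕ) < n₂
      · simp only [hw_def, Sum.elim_inl, if_pos hj, Real.coe_toNNReal _ hP₁₁]
        calc P₁₁ - δ ≤ P₁₁ := by linarith
          _ ≤ V := le_max_left _ _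
      · simp only [hw_def, Sum.elim_inl, if_neg hj, Real.coe_toNNReal _ hP₁₂]
        calc P₁₂ - δ ≤ P₁₂ := by linarith
          _ ≤ V := le_trans (le_max_left _ _) (le_max_right _ _)
    · simp only [hw_def, Sum.elim_inr, Real.coe_toNNReal _ hP₂]
      calc P₂ - δ ≤ P₂ := by linarith
        _ ≤ V := le_trans (le_max_right _ _) (le_max_right _ _)
  have hsmall : ∀ i, 2 * t * ((w i : ℝ≥0) : ℝ) < 1 :=
    fun i => (htV _ (w i).coe_nonneg (hwV i)).1
  -- mgf of each square
  have key : ∀ i, Integrable (fun ω => Real.exp (t * Z i ω)) ℙ ∧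
      mgf (Z i) ℙ t = (Real.sqrt (1 - 2 * t * ((w i : ℝ≥0) : ℝ)))⁻¹ :=
    fun i => aux_mgf_sq (hmX i) (hmapi i) (hsmall i)
  -- Chernoff
  have h_int_S : Integrable (fun ω => Real.exp (t * (∑ i ∈ Finset.univ, Z i) ω)) ℙ :=
    hindepZ.integrable_exp_mul_sum hmZ (fun i _ => (key i).1)
  have hchern := measure_ge_le_exp_mul_mgf (μ := (ℙ : Measure Ω))
    (X := ∑ i ∈ Finset.univ, Z i) ((n₁ : ℝ) * PT) ht0.le h_int_S
  have hmgf : mgf (∑ i ∈ Finset.univ, Z i) ℙ t = ∏ i, mgf (Z i) ℙ t :=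
    hindepZ.mgf_sum hmZ Finset.univ
  -- bound the product
  have hprod : (∏ i, mgf (Z i) ℙ t)
      ≤ Real.exp (∑ i, (t * ((w i : ℝ≥0) : ℝ) + t * δ / 2)) := by
    rw [Real.exp_sum]
    refine Finset.prod_le_prod (fun i _ => mgf_nonneg) (fun i _ => ?_)
    rw [(key i).2]
    exact aux_sqrt_bound ht0.le (w i).coe_nonneg hδ (hsmall i)
      (htV _ (w i).coe_nonneg (hwV i)).2
  -- evaluate the exponent sum
  have hcard : ((Finset.univ.filter (fun j : Fin n₁ => n₂ ≤ (j : ℕ))).card : ℝ)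
      = (n₁ : ℝ) - (n₂ : ℝ) := by
    have h := aux_sum_fin_split hn (fun _ : Fin n₁ => (1 : ℕ))
    simp only [Finset.sum_const, smul_eq_mul, mul_one, Finset.card_univ, Fintype.card_fin] at h
    have : (n₁ : ℝ) = (n₂ : ℝ) + ((Finset.univ.filter (fun j : Fin n₁ => n₂ ≤ (j : ℕ))).card : ℝ) := by
      exact_mod_cast congrArg (Nat.cast : ℕ → ℝ) h
    linarith
  have hsum : ∑ i, (t * ((w i : ℝ≥0) : ℝ) + t * δ / 2)
      = (n₂ : ℝ) * (t * (P₁₁ - δ) + t * δ / 2)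
        + ((n₁ : ℝ) - n₂) * (t * (P₁₂ - δ) + t * δ / 2)
        + (n₂ : ℝ) * (t * (P₂ - δ) + t * δ / 2) := by
    rw [Fintype.sum_sum_type]
    congr 1
    · rw [aux_sum_fin_split hn (fun j : Fin n₁ => t * ((w (Sum.inl j) : ℝ≥0) : ℝ) + t * δ / 2)]
      congr 1
      · rw [Finset.sum_congr rfl (fun j _ => ?_), Finset.sum_const, Finset.card_univ,
          Fintype.card_fin, nsmul_eq_mul]
        simp only [hw_def, Sum.elim_inl]
        rw [if_pos (by simpa using j.isLt), Real.coe_toNNReal _ hP₁₁]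
      · rw [Finset.sum_congr rfl (fun j hj => ?_), Finset.sum_const, nsmul_eq_mul, hcard]
        simp only [hw_def, Sum.elim_inl]
        rw [if_neg (not_lt.mpr (Finset.mem_filter.mp hj).2), Real.coe_toNNReal _ hP₁₂]
    · rw [Finset.sum_congr rfl (fun j _ => ?_), Finset.sum_const, Finset.card_univ,
        Fintype.card_fin, nsmul_eq_mul]
      simp only [hw_def, Sum.elim_inr]
      rw [Real.coe_toNNReal _ hP₂]
  -- the target set is contained in the Chernoff event
  have hTeq : ∀ ω : Ω,
      (∑ j : Fin n₂, (X₁ (Fin.castLE hn j) ω ^ 2 + X₂ j ω ^ 2)) +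
        (∑ j ∈ Finset.univ.filter (fun j : Fin n₁ => n₂ ≤ (j : ℕ)), X₁ j ω ^ 2)
      = (∑ i ∈ Finset.univ, Z i) ω := by
    intro ω
    rw [Finset.sum_apply, Fintype.sum_sum_type]
    simp only [hZ_def, hX_def, Sum.elim_inl, Sum.elim_inr]
    rw [aux_sum_fin_split hn (fun j : Fin n₁ => X₁ j ω ^ 2), Finset.sum_add_distrib]
    ring
  have hsub : {ω : Ω | (n₁ : ℝ) * PT <
      (∑ j : Fin n₂, (X₁ (Fin.castLE hn j) ω ^ 2 + X₂ j ω ^ 2)) +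
        ∑ j ∈ Finset.univ.filter (fun j : Fin n₁ => n₂ ≤ (j : ℕ)), X₁ j ω ^ 2}
      ⊆ {ω : Ω | (n₁ : ℝ) * PT ≤ (∑ i ∈ Finset.univ, Z i) ω} := by
    intro ω hω
    simp only [Set.mem_setOf_eq] at hω ⊢
    rw [← hTeq ω]
    exact hω.le
  -- assemble
  calc (ℙ {ω : Ω | (n₁ : ℝ) * PT <
          (∑ j : Fin n₂, (X₁ (Fin.castLE hn j) ω ^ 2 + X₂ j ω ^ 2)) +
          ∑ j ∈ Finset.univ.filter (fun j : Fin n₁ => n₂ ≤ (j : ℕ)), X₁ j ω ^ 2}).toReal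
      ≤ (ℙ {ω : Ω | (n₁ : ℝ) * PT ≤ (∑ i ∈ Finset.univ, Z i) ω}).toReal := by
        exact ENNReal.toReal_mono (measure_ne_top _ _) (measure_mono hsub)
    _ ≤ Real.exp (-t * ((n₁ : ℝ) * PT)) * mgf (∑ i ∈ Finset.univ, Z i) ℙ t := hchern
    _ ≤ Real.exp (-t * ((n₁ : ℝ) * PT))
          * Real.exp (∑ i, (t * ((w i : ℝ≥0) : ℝ) + t * δ / 2)) := by
        rw [hmgf]
        exact mul_le_mul_of_nonneg_left hprod (Real.exp_pos _).le
    _ ≤ 1 * Real.exp (-(t * δ) * (n₂ : ℝ)) := by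
        rw [← Real.exp_add, one_mul, Real.exp_le_exp, hsum]
        have hcast : (n₂ : ℝ) ≤ (n₁ : ℝ) := Nat.cast_le.mpr hn
        linarith [mul_le_mul_of_nonneg_left hbudget ht0.le,
          mul_nonneg (mul_nonneg ht0.le hδ.le) (sub_nonneg.mpr hcast)]
end

section
/- Let g > 0, P > 0, let x ∈ ℝ, and let Z be a real random variable with the standard Gaussian distribution N(0,1) on a probability space (Ω, 𝒜, ℙ). Then E[ | √g·x·Z + (g·P/2)·(1 − Z²) |³ ] ≤ 4·g^{3/2}·( 8·g^{3/2}·P³ + 2·|x|³ ). -/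
open MeasureTheory ProbabilityTheory Real
open scoped NNReal ENNReal

noncomputable def gI (n : ℕ) : ℝ := ∫ x : ℝ, x ^ n * Real.exp (-(2⁻¹) * x ^ 2)

lemma integrable_gI (n : ℕ) :
    Integrable fun x : ℝ => x ^ n * Real.exp (-(2⁻¹) * x ^ 2) := by
  have h : (-1 : ℝ) < (n : ℝ) := lt_of_lt_of_le (by norm_num) (Nat.cast_nonneg n)
  simpa [Real.rpow_natCast] using
    integrable_rpow_mul_exp_neg_mul_sq (b := 2⁻¹) (by norm_num) h

lemma gI_rec (n : ℕ) : gI (n + 2) = (n + 1) * gI n := by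
  have hu : ∀ t : ℝ, HasDerivAt (fun s : ℝ => s ^ (n + 1))
      (((n : ℝ) + 1) * t ^ n) t := by
    intro t
    simpa using hasDerivAt_pow (n + 1) t
  have hv : ∀ t : ℝ, HasDerivAt (fun s : ℝ => -Real.exp (-(2⁻¹) * s ^ 2))
      (t * Real.exp (-(2⁻¹) * t ^ 2)) t := by
    intro t
    have h1 : HasDerivAt (fun s : ℝ => -(2⁻¹ : ℝ) * s ^ 2) (-(2⁻¹) * (2 * t ^ 1)) t :=
      (hasDerivAt_pow 2 t).const_mul _
    have h2 : HasDerivAt (fun s : ℝ => -Real.exp (-(2⁻¹) * s ^ 2)) _ t := (h1.exp).neg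
    convert h2 using 1
    ring
  have huv' : Integrable ((fun s : ℝ => s ^ (n + 1)) *
      fun t : ℝ => t * Real.exp (-(2⁻¹) * t ^ 2)) := by
    have := integrable_gI (n + 2)
    refine this.congr ?_
    filter_upwards with t
    simp [Pi.mul_apply]
    ring
  have hu'v : Integrable ((fun t : ℝ => ((n : ℝ) + 1) * t ^ n) *
      fun s : ℝ => -Real.exp (-(2⁻¹) * s ^ 2)) := by
    have := ((integrable_gI n).const_mul ((n : ℝ) + 1)).neg
    refine this.congr ?_
    filter_upwards with t
    simp [Pi.mul_apply]
    ring
  have huv : Integrable ((fun s : ℝ => s ^ (n + 1)) *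
      fun s : ℝ => -Real.exp (-(2⁻¹) * s ^ 2)) := by
    have := (integrable_gI (n + 1)).neg
    refine this.congr ?_
    filter_upwards with t
    simp [Pi.mul_apply]
  have key := integral_mul_deriv_eq_deriv_mul_of_integrable (fun t _ => hu t) (fun t _ => hv t) huv' hu'v huv
  have hL : ∫ t : ℝ, t ^ (n + 1) * (t * Real.exp (-(2⁻¹) * t ^ 2)) = gI (n + 2) := by
    unfold gI
    congr 1
    funext t
    ring
  have hR : -∫ t : ℝ, ((n : ℝ) + 1) * t ^ n * -Real.exp (-(2⁻¹) * t ^ 2)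
      = ((n : ℝ) + 1) * gI n := by
    unfold gI
    rw [← integral_neg, ← integral_const_mul]
    congr 1
    funext t
    ring
  rw [← hL, key, ← hR]

lemma gI_zero : gI 0 = Real.sqrt (2 * π) := by
  unfold gI
  simp only [pow_zero, one_mul]
  have := integral_gaussian 2⁻¹
  rw [show (-(2⁻¹) : ℝ) = -(2⁻¹ : ℝ) by ring] at *
  simpa [div_inv_eq_mul, mul_comm] using this

lemma gI_two : gI 2 = Real.sqrt (2 * π) := by
  have := gI_rec 0
  norm_num at this
  rw [this, gI_zero]

lemma gI_four : gI 4 = 3 * Real.sqrt (2 * π) := by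
  have := gI_rec 2
  norm_num at this
  rw [this, gI_two]

lemma gI_six : gI 6 = 15 * Real.sqrt (2 * π) := by
  have := gI_rec 4
  norm_num at this
  rw [this, gI_four]
  ring

lemma integral_gaussianReal_eq (f : ℝ → ℝ) :
    ∫ t, f t ∂(gaussianReal 0 1) = ∫ t, gaussianPDFReal 0 1 t * f t := by
  rw [gaussianReal_of_var_ne_zero _ one_ne_zero]
  have h : gaussianPDF 0 1
      = fun t => ((Real.toNNReal (gaussianPDFReal 0 1 t) : ℝ≥0) : ℝ≥0∞) := rfl
  rw [h, integral_withDensity_eq_integral_smul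
    ((measurable_gaussianPDFReal 0 1).real_toNNReal) f]
  congr 1
  funext t
  simp [NNReal.smul_def, Real.coe_toNNReal _ (gaussianPDFReal_nonneg 0 1 t)]

lemma pdf_eq (t : ℝ) :
    gaussianPDFReal 0 1 t = (Real.sqrt (2 * π))⁻¹ * Real.exp (-(2⁻¹) * t ^ 2) := by
  unfold gaussianPDFReal
  norm_num
  left
  ring

/-- Absolute centralized third-moment bound (66) of Appendix I:
`E[|√g·x·Z + (gP/2)(1 - Z²)|³] ≤ 4 g^{3/2} (8 g^{3/2} P³ + 2|x|³)`. -/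
theorem third_absolute_moment_centralized_information_density
    {Ω : Type*} [MeasureSpace Ω] [IsProbabilityMeasure (ℙ : Measure Ω)]
    (g P x : ℝ) (hg : 0 < g) (hP : 0 < P)
    (Z : Ω → ℝ) (hZmeas : Measurable Z)
    (hZlaw : Measure.map Z ℙ = gaussianReal 0 1) :
    ∫ ω, |Real.sqrt g * x * Z ω + g * P / 2 * (1 - Z ω ^ 2)| ^ 3 ∂ℙ ≤
      4 * g ^ ((3 : ℝ) / 2) * (8 * g ^ ((3 : ℝ) / 2) * P ^ 3 + 2 * |x| ^ 3) := by
  set F : ℝ → ℝ := fun t => |Real.sqrt g * x * t + g * P / 2 * (1 - t ^ 2)| ^ 3 with hF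
  set c1 : ℝ := 4 * g ^ ((3 : ℝ) / 2) * |x| ^ 3 with hc1
  set c2 : ℝ := 4 * (g * P / 2) ^ 3 with hc2
  set G : ℝ → ℝ := fun t => c1 * ((t ^ 2 + t ^ 4) / 2) + c2 * (1 + t ^ 2) ^ 3 with hG
  have hFcont : Continuous F := by
    apply Continuous.pow
    apply Continuous.abs
    fun_prop
  have hg32 : (0 : ℝ) ≤ g ^ ((3 : ℝ) / 2) := Real.rpow_nonneg hg.le _
  -- pointwise bound
  have hkey : ∀ t : ℝ, F t ≤ G t := by
    intro t
    set a : ℝ := Real.sqrt g * x * t with ha'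
    set b : ℝ := g * P / 2 * (1 - t ^ 2) with hb'
    have h3 : |a + b| ^ 3 ≤ (|a| + |b|) ^ 3 :=
      pow_le_pow_left₀ (abs_nonneg _) (abs_add_le a b) 3
    have h4 : (|a| + |b|) ^ 3 ≤ 4 * (|a| ^ 3 + |b| ^ 3) := by
      nlinarith [abs_nonneg a, abs_nonneg b, sq_nonneg (|a| - |b|),
        mul_nonneg (add_nonneg (abs_nonneg a) (abs_nonneg b)) (sq_nonneg (|a| - |b|))]
    have ha : |a| ^ 3 = g ^ ((3 : ℝ) / 2) * |x| ^ 3 * |t| ^ 3 := by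
      have h32 : Real.sqrt g ^ 3 = g ^ ((3 : ℝ) / 2) := by
        rw [Real.sqrt_eq_rpow, ← Real.rpow_natCast (g ^ ((1 : ℝ) / 2)) 3,
          ← Real.rpow_mul hg.le]
        norm_num
      rw [ha', abs_mul, abs_mul, abs_of_nonneg (Real.sqrt_nonneg g), mul_pow, mul_pow, h32]
    have ht3 : |t| ^ 3 ≤ (t ^ 2 + t ^ 4) / 2 := by
      have h2 : t ^ 2 * |t| = |t| ^ 3 := by rw [← sq_abs]; ring
      nlinarith [sq_nonneg (t ^ 2 - |t|), abs_nonneg t]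
    have hb : |b| ^ 3 ≤ (g * P / 2) ^ 3 * (1 + t ^ 2) ^ 3 := by
      have hle : |b| ≤ g * P / 2 * (1 + t ^ 2) := by
        rw [hb', abs_mul, abs_of_nonneg (by positivity : (0:ℝ) ≤ g * P / 2)]
        refine mul_le_mul_of_nonneg_left ?_ (by positivity)
        exact abs_le.mpr ⟨by nlinarith [sq_nonneg t], by nlinarith [sq_nonneg t]⟩
      calc |b| ^ 3 ≤ (g * P / 2 * (1 + t ^ 2)) ^ 3 := pow_le_pow_left₀ (abs_nonneg _) hle 3
        _ = _ := by rw [mul_pow]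
    have hA : |a| ^ 3 ≤ g ^ ((3 : ℝ) / 2) * |x| ^ 3 * ((t ^ 2 + t ^ 4) / 2) := by
      rw [ha]
      exact mul_le_mul_of_nonneg_left ht3 (by positivity)
    calc F t = |a + b| ^ 3 := rfl
      _ ≤ 4 * (|a| ^ 3 + |b| ^ 3) := h3.trans h4
      _ ≤ 4 * (g ^ ((3 : ℝ) / 2) * |x| ^ 3 * ((t ^ 2 + t ^ 4) / 2)
            + (g * P / 2) ^ 3 * (1 + t ^ 2) ^ 3) := by linarith
      _ = G t := by rw [hG, hc1, hc2]; ring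
  -- transport to the Gaussian measure
  have h1 : ∫ ω, |Real.sqrt g * x * Z ω + g * P / 2 * (1 - Z ω ^ 2)| ^ 3 ∂ℙ
      = ∫ t, F t ∂(gaussianReal 0 1) := by
    rw [← hZlaw, integral_map hZmeas.aemeasurable hFcont.aestronglyMeasurable]
  set S : ℝ := (Real.sqrt (2 * π))⁻¹ with hS
  have hGrw : (fun t => gaussianPDFReal 0 1 t * G t)
      = fun t => S * (c2 * (t ^ 0 * Real.exp (-(2⁻¹) * t ^ 2))
          + (c1 / 2 + 3 * c2) * (t ^ 2 * Real.exp (-(2⁻¹) * t ^ 2))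
          + (c1 / 2 + 3 * c2) * (t ^ 4 * Real.exp (-(2⁻¹) * t ^ 2))
          + c2 * (t ^ 6 * Real.exp (-(2⁻¹) * t ^ 2))) := by
    funext t
    rw [pdf_eq t, hG, hS]
    ring
  have hGint : Integrable fun t => gaussianPDFReal 0 1 t * G t := by
    rw [hGrw]
    exact (((((integrable_gI 0).const_mul c2).add
      ((integrable_gI 2).const_mul (c1 / 2 + 3 * c2))).add
      ((integrable_gI 4).const_mul (c1 / 2 + 3 * c2))).add
      ((integrable_gI 6).const_mul c2)).const_mul S
  have iA : Integrable (fun t : ℝ => c2 * (t ^ 0 * Real.exp (-(2⁻¹) * t ^ 2))) :=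
    (integrable_gI 0).const_mul c2
  have iB : Integrable (fun t : ℝ => (c1 / 2 + 3 * c2) * (t ^ 2 * Real.exp (-(2⁻¹) * t ^ 2))) :=
    (integrable_gI 2).const_mul _
  have iC : Integrable (fun t : ℝ => (c1 / 2 + 3 * c2) * (t ^ 4 * Real.exp (-(2⁻¹) * t ^ 2))) :=
    (integrable_gI 4).const_mul _
  have iD : Integrable (fun t : ℝ => c2 * (t ^ 6 * Real.exp (-(2⁻¹) * t ^ 2))) :=
    (integrable_gI 6).const_mul c2
  have iAB : Integrable (fun t : ℝ => c2 * (t ^ 0 * Real.exp (-(2⁻¹) * t ^ 2))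
      + (c1 / 2 + 3 * c2) * (t ^ 2 * Real.exp (-(2⁻¹) * t ^ 2))) := iA.add iB
  have iABC : Integrable (fun t : ℝ => c2 * (t ^ 0 * Real.exp (-(2⁻¹) * t ^ 2))
      + (c1 / 2 + 3 * c2) * (t ^ 2 * Real.exp (-(2⁻¹) * t ^ 2))
      + (c1 / 2 + 3 * c2) * (t ^ 4 * Real.exp (-(2⁻¹) * t ^ 2))) := iAB.add iC
  have hGval : ∫ t, gaussianPDFReal 0 1 t * G t
      = S * (c2 * gI 0 + (c1 / 2 + 3 * c2) * gI 2 + (c1 / 2 + 3 * c2) * gI 4 + c2 * gI 6) := by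
    rw [hGrw, integral_const_mul]
    congr 1
    rw [integral_add iABC iD, integral_add iAB iC, integral_add iA iB,
      integral_const_mul, integral_const_mul, integral_const_mul, integral_const_mul]
    rfl
  have hmono : ∫ t, F t ∂(gaussianReal 0 1)
      ≤ S * (c2 * gI 0 + (c1 / 2 + 3 * c2) * gI 2 + (c1 / 2 + 3 * c2) * gI 4 + c2 * gI 6) := by
    rw [integral_gaussianReal_eq F, ← hGval]
    refine integral_mono_of_nonneg (ae_of_all _ fun t => ?_) hGint (ae_of_all _ fun t => ?_)
    · exact mul_nonneg (gaussianPDFReal_nonneg 0 1 t) (by positivity)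
    · exact mul_le_mul_of_nonneg_left (hkey t) (gaussianPDFReal_nonneg 0 1 t)
  have hSgI : S * Real.sqrt (2 * π) = 1 := by
    rw [hS]
    exact inv_mul_cancel₀ (by positivity)
  have hval : S * (c2 * gI 0 + (c1 / 2 + 3 * c2) * gI 2 + (c1 / 2 + 3 * c2) * gI 4 + c2 * gI 6)
      = 2 * c1 + 28 * c2 := by
    rw [gI_zero, gI_two, gI_four, gI_six]
    linear_combination (2 * c1 + 28 * c2) * hSgI
  have hsq : g ^ ((3 : ℝ) / 2) * g ^ ((3 : ℝ) / 2) = g ^ 3 := by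
    rw [← Real.rpow_add hg, ← Real.rpow_natCast g 3]
    norm_num
  have hfin : 2 * c1 + 28 * c2
      ≤ 4 * g ^ ((3 : ℝ) / 2) * (8 * g ^ ((3 : ℝ) / 2) * P ^ 3 + 2 * |x| ^ 3) := by
    rw [hc1, hc2]
    have hg3 : (0 : ℝ) ≤ g ^ 3 := by positivity
    have hP3 : (0 : ℝ) ≤ P ^ 3 := by positivity
    nlinarith [mul_nonneg hg3 hP3]
  calc ∫ ω, |Real.sqrt g * x * Z ω + g * P / 2 * (1 - Z ω ^ 2)| ^ 3 ∂ℙ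
      = ∫ t, F t ∂(gaussianReal 0 1) := h1
    _ ≤ _ := hmono
    _ = 2 * c1 + 28 * c2 := hval
    _ ≤ _ := hfin
end

section
/- Let g > 0, P > 0, let n₁ ≥ n₂ > 0 be reals, let L ≥ 0, and let s be a real number with 0 ≤ s ≤ n₁·P. Write C := (1/2)·log₂(1 + gP) and suppose the positivity condition n₂·( C − (log₂ e)·gP/(2(1+gP)) ) ≥ L holds (the factor in parentheses being positive). Then ( n₂·C + (log₂ e)·g·(s − n₂·P)/(2(1+gP)) − L ) / ( (log₂ e/(2(1+gP)))·√(4·g·s + 2·n₂·g²·P²) ) ≥ ( (2(1+gP)·C − (log₂ e)·gP)·n₂ − 2(1+gP)·L ) / ( (log₂ e)·√(4·g·P + 2·g²·P²)·√n₁ ). -/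
open Real

/-- The chain (76)–(81) of Appendix I: a uniform lower bound on `r_m(n₂)` over all
codewords whose truncated energy satisfies `0 ≤ s ≤ n₁ P`. -/
theorem r_m_uniform_lower_bound
    (g P n₁ n₂ L s C : ℝ)
    (hg : 0 < g) (hP : 0 < P) (hn₂ : 0 < n₂) (hn : n₂ ≤ n₁) (hL : 0 ≤ L)
    (hs0 : 0 ≤ s) (hs : s ≤ n₁ * P)
    (hC : C = (1 / 2) * Real.logb 2 (1 + g * P))
    (hpos : n₂ * (C - Real.logb 2 (Real.exp 1) * g * P / (2 * (1 + g * P))) ≥ L) :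
    (n₂ * C + Real.logb 2 (Real.exp 1) * g * (s - n₂ * P) / (2 * (1 + g * P)) - L) /
        ((Real.logb 2 (Real.exp 1) / (2 * (1 + g * P))) *
          Real.sqrt (4 * g * s + 2 * n₂ * g ^ 2 * P ^ 2)) ≥
      ((2 * (1 + g * P) * C - Real.logb 2 (Real.exp 1) * g * P) * n₂ -
          2 * (1 + g * P) * L) /
        (Real.logb 2 (Real.exp 1) * Real.sqrt (4 * g * P + 2 * g ^ 2 * P ^ 2) *
          Real.sqrt n₁) := by
  set ℓ := Real.logb 2 (Real.exp 1) with hℓdef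
  have hℓ : 0 < ℓ := by
    rw [hℓdef, Real.logb, Real.log_exp]
    have : 0 < Real.log 2 := Real.log_pos (by norm_num)
    positivity
  have hA : 0 < 1 + g * P := by positivity
  have hn₁ : 0 < n₁ := lt_of_lt_of_le hn₂ hn
  -- sqrt variables
  set u := Real.sqrt (4 * g * s + 2 * n₂ * g ^ 2 * P ^ 2) with hu
  set v := Real.sqrt (4 * g * P + 2 * g ^ 2 * P ^ 2) with hv
  set w := Real.sqrt n₁ with hw
  have hupos : 0 < u := Real.sqrt_pos.mpr (by positivity)
  have hvpos : 0 < v := Real.sqrt_pos.mpr (by positivity)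
  have hwpos : 0 < w := Real.sqrt_pos.mpr hn₁
  have huvw : u ≤ v * w := by
    rw [hu, hv, hw, ← Real.sqrt_mul (by positivity)]
    apply Real.sqrt_le_sqrt
    nlinarith [mul_le_mul_of_nonneg_left hs (by positivity : (0:ℝ) ≤ 4 * g),
      mul_le_mul_of_nonneg_right hn (by positivity : (0:ℝ) ≤ 2 * g ^ 2 * P ^ 2)]
  have hDl : 0 < ℓ / (2 * (1 + g * P)) * u := by positivity
  have hDr : 0 < ℓ * v * w := by positivity
  rw [ge_iff_le, div_le_div_iff₀ hDr hDl]
  -- E := 2A-scaled excess rate, nonnegative by hpos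
  set A := 1 + g * P with hAdef
  have hE : 0 ≤ (2 * A * C - ℓ * g * P) * n₂ - 2 * A * L := by
    have h := mul_le_mul_of_nonneg_left hpos (le_of_lt (show (0:ℝ) < 2 * A by positivity))
    have hAne : (2 * A) ≠ 0 := by positivity
    field_simp at h
    nlinarith [h]
  have key : ((2 * A * C - ℓ * g * P) * n₂ - 2 * A * L) * u
      ≤ (((2 * A * C - ℓ * g * P) * n₂ - 2 * A * L) + ℓ * g * s) * (v * w) := by
    have h1 := mul_le_mul_of_nonneg_left huvw hE
    nlinarith [mul_nonneg (mul_nonneg (mul_nonneg hℓ.le hg.le) hs0)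
      (mul_nonneg hvpos.le hwpos.le), h1]
  have h2A : (0:ℝ) < 2 * A := by positivity
  rw [div_mul_eq_mul_div, ← mul_div_assoc, div_le_iff₀ h2A]
  have expand : (n₂ * C + ℓ * g * (s - n₂ * P) / (2 * A) - L) * (ℓ * v * w) * (2 * A)
      = ℓ * ((((2 * A * C - ℓ * g * P) * n₂ - 2 * A * L) + ℓ * g * s) * (v * w)) := by
    field_simp
    ring
  rw [expand]
  calc ((2 * A * C - ℓ * g * P) * n₂ - 2 * A * L) * (ℓ * u)
      = ℓ * (((2 * A * C - ℓ * g * P) * n₂ - 2 * A * L) * u) := by ring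
    _ ≤ ℓ * ((((2 * A * C - ℓ * g * P) * n₂ - 2 * A * L) + ℓ * g * s) * (v * w)) :=
        mul_le_mul_of_nonneg_left key hℓ.le
end

section
/- Let h > 0, P₁ > 0, P₂ ≥ 0, and let X and Z̃ be independent real random variables on a probability space (Ω, 𝒜, ℙ) with X distributed as N(0, P₁) and Z̃ distributed as N(0, 1 + h·P₂). Then Var[ (log₂ e / (2(1 + h(P₁+P₂)))) · ( h·( X² − (P₁/(1+hP₂))·Z̃² ) + 2·√h·X·Z̃ ) ] = (log₂ e)² · h·P₁ / (1 + h·(P₁ + P₂)). -/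
open MeasureTheory ProbabilityTheory Real Filter Set NNReal ENNReal

namespace GaussMomentAux

lemma integrable_pow_mul_exp {b : ℝ} (hb : 0 < b) (n : ℕ) :
    Integrable (fun x : ℝ => x ^ n * Real.exp (-b * x ^ 2)) := by
  have hs : (-1 : ℝ) < n := lt_of_lt_of_le (by norm_num) (Nat.cast_nonneg n)
  simpa [Real.rpow_natCast] using integrable_rpow_mul_exp_neg_mul_sq hb hs

lemma tendsto_pow_mul_exp_atTop {b : ℝ} (hb : 0 < b) (n : ℕ) :
    Tendsto (fun x : ℝ => x ^ n * Real.exp (-b * x ^ 2)) atTop (nhds 0) := by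
  have h := rpow_mul_exp_neg_mul_sq_isLittleO_exp_neg hb (n : ℝ)
  have hlin : Tendsto (fun x : ℝ => (1 / 2 : ℝ) * x) atTop atTop :=
    Tendsto.const_mul_atTop one_half_pos tendsto_id
  have h0 : Tendsto (fun x : ℝ => Real.exp (-(1 / 2) * x)) atTop (nhds 0) := by
    have heq : (fun x : ℝ => Real.exp (-(1 / 2) * x))
        = (fun x : ℝ => Real.exp (-x)) ∘ (fun x : ℝ => (1 / 2 : ℝ) * x) := by
      funext x; simp [Function.comp, neg_mul]
    rw [heq]
    exact Real.tendsto_exp_neg_atTop_nhds_zero.comp hlin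
  simpa [Real.rpow_natCast] using h.trans_tendsto h0

lemma tendsto_pow_mul_exp_atBot {b : ℝ} (hb : 0 < b) (n : ℕ) :
    Tendsto (fun x : ℝ => x ^ n * Real.exp (-b * x ^ 2)) atBot (nhds 0) := by
  have h := (tendsto_pow_mul_exp_atTop hb n).comp tendsto_neg_atBot_atTop
  have heq : (fun x : ℝ => (-x) ^ n * Real.exp (-b * (-x) ^ 2))
      = fun x : ℝ => (-1 : ℝ) ^ n * (x ^ n * Real.exp (-b * x ^ 2)) := by
    funext x
    rw [neg_pow, neg_sq]
    ring
  have h' : Tendsto (fun x : ℝ => (-1 : ℝ) ^ n * (x ^ n * Real.exp (-b * x ^ 2)))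
      atBot (nhds 0) := by
    rw [← heq]; exact h
  have h2 := h'.const_mul ((-1 : ℝ) ^ n)
  have hpow : ((-1 : ℝ) ^ n) * ((-1 : ℝ) ^ n) = 1 := by
    rw [← pow_add, ← two_mul, pow_mul]; norm_num
  simp only [← mul_assoc, hpow, one_mul, mul_zero] at h2
  exact h2

lemma integral_pow_mul_exp_odd {b : ℝ} (n : ℕ) (hn : Odd n) :
    ∫ x : ℝ, x ^ n * Real.exp (-b * x ^ 2) = 0 := by
  have h := MeasureTheory.integral_neg_eq_self
    (fun x : ℝ => x ^ n * Real.exp (-b * x ^ 2)) volume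
  simp only [hn.neg_pow, neg_sq, neg_mul] at h
  rw [integral_neg] at h
  simp only [neg_mul]
  linarith

lemma integral_pow_mul_exp_succ {b : ℝ} (hb : 0 < b) (n : ℕ) :
    ∫ x : ℝ, x ^ (n + 2) * Real.exp (-b * x ^ 2)
      = ((n + 1 : ℝ) / (2 * b)) * ∫ x : ℝ, x ^ n * Real.exp (-b * x ^ 2) := by
  set f : ℝ → ℝ := fun x => x ^ (n + 1) * Real.exp (-b * x ^ 2) with hf
  set g : ℝ → ℝ := fun x =>
      (n + 1 : ℝ) * (x ^ n * Real.exp (-b * x ^ 2))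
        - (2 * b) * (x ^ (n + 2) * Real.exp (-b * x ^ 2)) with hg
  have hderiv : ∀ x : ℝ, HasDerivAt f (g x) x := by
    intro x
    have h1 : HasDerivAt (fun x : ℝ => x ^ (n + 1)) ((n + 1 : ℝ) * x ^ n) x := by
      simpa using hasDerivAt_pow (n + 1) x
    have h2 : HasDerivAt (fun x : ℝ => Real.exp (-b * x ^ 2))
        (Real.exp (-b * x ^ 2) * (-b * (2 * x))) x := by
      have := ((hasDerivAt_pow 2 x).const_mul (-b)).exp
      simpa using this
    have := h1.fun_mul h2
    refine this.congr_deriv ?_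
    show _ = (n + 1 : ℝ) * (x ^ n * Real.exp (-b * x ^ 2)) - (2 * b) * (x ^ (n + 2) * Real.exp (-b * x ^ 2))
    ring
  have hint_n := integrable_pow_mul_exp hb n
  have hint_n2 := integrable_pow_mul_exp hb (n + 2)
  have hintg : Integrable g := (hint_n.const_mul _).sub (hint_n2.const_mul _)
  have hIoi : ∫ x in Ioi (0 : ℝ), g x = 0 - f 0 :=
    integral_Ioi_of_hasDerivAt_of_tendsto' (fun x _ => hderiv x)
      hintg.integrableOn (tendsto_pow_mul_exp_atTop hb (n + 1))
  have hIic : ∫ x in Iic (0 : ℝ), g x = f 0 - 0 :=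
    integral_Iic_of_hasDerivAt_of_tendsto' (fun x _ => hderiv x)
      hintg.integrableOn (tendsto_pow_mul_exp_atBot hb (n + 1))
  have htot : ∫ x : ℝ, g x = 0 := by
    rw [← intervalIntegral.integral_Iic_add_Ioi hintg.integrableOn hintg.integrableOn,
      hIoi, hIic]
    ring
  rw [hg] at htot
  rw [integral_sub (hint_n.const_mul _) (hint_n2.const_mul _),
    integral_const_mul, integral_const_mul] at htot
  have hb' : (2 : ℝ) * b ≠ 0 := by positivity
  simp only [neg_mul] at htot ⊢
  field_simp
  linear_combination -htot

lemma integral_pow_mul_exp_two {b : ℝ} (hb : 0 < b) :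
    ∫ x : ℝ, x ^ 2 * Real.exp (-b * x ^ 2) = Real.sqrt (π / b) / (2 * b) := by
  have h := integral_pow_mul_exp_succ hb 0
  simp only [pow_zero, one_mul, Nat.cast_zero, zero_add] at h
  rw [integral_gaussian] at h
  rw [h]; ring

lemma integral_pow_mul_exp_four {b : ℝ} (hb : 0 < b) :
    ∫ x : ℝ, x ^ 4 * Real.exp (-b * x ^ 2)
      = 3 / (2 * b) * (Real.sqrt (π / b) / (2 * b)) := by
  have h := integral_pow_mul_exp_succ hb 2
  rw [integral_pow_mul_exp_two hb] at h
  norm_num at h ⊢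
  linarith

lemma gaussianPDF_eq_coe_toNNReal (v : ℝ≥0) :
    gaussianPDF 0 v = fun x => ((gaussianPDFReal 0 v x).toNNReal : ℝ≥0∞) := rfl

lemma integral_gaussianReal_eq (v : ℝ≥0) (hv : v ≠ 0) (g : ℝ → ℝ) :
    ∫ x, g x ∂(gaussianReal 0 v) = ∫ x, gaussianPDFReal 0 v x * g x := by
  rw [gaussianReal_of_var_ne_zero 0 hv, gaussianPDF_eq_coe_toNNReal,
    integral_withDensity_eq_integral_smul ((measurable_gaussianPDFReal 0 v).real_toNNReal) g]
  congr 1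
  funext x
  simp [NNReal.smul_def, Real.coe_toNNReal _ (gaussianPDFReal_nonneg 0 v x)]

lemma integrable_gaussianReal_iff (v : ℝ≥0) (hv : v ≠ 0) (g : ℝ → ℝ) :
    Integrable g (gaussianReal 0 v)
      ↔ Integrable (fun x => gaussianPDFReal 0 v x * g x) volume := by
  rw [gaussianReal_of_var_ne_zero 0 hv, gaussianPDF_eq_coe_toNNReal,
    integrable_withDensity_iff_integrable_smul ((measurable_gaussianPDFReal 0 v).real_toNNReal)]
  apply integrable_congr
  filter_upwards with x
  simp [NNReal.smul_def, Real.coe_toNNReal _ (gaussianPDFReal_nonneg 0 v x)]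

lemma pdf_eq (v : ℝ≥0) (x : ℝ) :
    gaussianPDFReal 0 v x
      = (Real.sqrt (2 * π * v))⁻¹ * Real.exp (-(2 * (v : ℝ))⁻¹ * x ^ 2) := by
  unfold gaussianPDFReal
  congr 1
  rw [Real.exp_eq_exp]
  ring

lemma vpos (v : ℝ≥0) (hv : v ≠ 0) : 0 < (v : ℝ) := by
  exact_mod_cast pos_iff_ne_zero.mpr hv

lemma integral_pow_gaussianReal (v : ℝ≥0) (hv : v ≠ 0) (n : ℕ) :
    ∫ x, x ^ n ∂(gaussianReal 0 v)
      = (Real.sqrt (2 * π * v))⁻¹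
          * ∫ x : ℝ, x ^ n * Real.exp (-(2 * (v : ℝ))⁻¹ * x ^ 2) := by
  have heq : (fun x : ℝ => gaussianPDFReal 0 v x * x ^ n)
      = fun x : ℝ => (Real.sqrt (2 * π * v))⁻¹
          * (x ^ n * Real.exp (-(2 * (v : ℝ))⁻¹ * x ^ 2)) := by
    funext x; rw [pdf_eq]; ring
  rw [integral_gaussianReal_eq v hv, heq, integral_const_mul]

lemma integrable_pow_gaussianReal (v : ℝ≥0) (hv : v ≠ 0) (n : ℕ) :
    Integrable (fun x : ℝ => x ^ n) (gaussianReal 0 v) := by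
  rw [integrable_gaussianReal_iff v hv]
  have heq : (fun x : ℝ => gaussianPDFReal 0 v x * x ^ n)
      = fun x : ℝ => (Real.sqrt (2 * π * v))⁻¹
          * (x ^ n * Real.exp (-(2 * (v : ℝ))⁻¹ * x ^ 2)) := by
    funext x; rw [pdf_eq]; ring
  rw [heq]
  exact (integrable_pow_mul_exp (by have := vpos v hv; positivity) n).const_mul _


lemma sqrt_ne (v : ℝ≥0) (hv : v ≠ 0) : Real.sqrt (2 * π * v) ≠ 0 := by
  have hvp := vpos v hv
  have hπ := Real.pi_pos
  positivity

lemma bpos (v : ℝ≥0) (hv : v ≠ 0) : 0 < (2 * (v : ℝ))⁻¹ := by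
  have := vpos v hv; positivity

lemma pi_div_b (v : ℝ≥0) (hv : v ≠ 0) : π / (2 * (v : ℝ))⁻¹ = 2 * π * v := by
  have := (vpos v hv).ne'
  field_simp

lemma two_b_inv (v : ℝ≥0) (hv : v ≠ 0) : (2 * (2 * (v : ℝ))⁻¹)⁻¹ = (v : ℝ) := by
  have := (vpos v hv).ne'
  field_simp

lemma gauss_moment_one (v : ℝ≥0) (hv : v ≠ 0) :
    ∫ x, x ^ 1 ∂(gaussianReal 0 v) = 0 := by
  rw [integral_pow_gaussianReal v hv, integral_pow_mul_exp_odd 1 odd_one, mul_zero]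

lemma gauss_moment_three (v : ℝ≥0) (hv : v ≠ 0) :
    ∫ x, x ^ 3 ∂(gaussianReal 0 v) = 0 := by
  rw [integral_pow_gaussianReal v hv, integral_pow_mul_exp_odd 3 ⟨1, by norm_num⟩, mul_zero]

lemma gauss_moment_two (v : ℝ≥0) (hv : v ≠ 0) :
    ∫ x, x ^ 2 ∂(gaussianReal 0 v) = (v : ℝ) := by
  rw [integral_pow_gaussianReal v hv, integral_pow_mul_exp_two (bpos v hv),
    pi_div_b v hv, div_eq_mul_inv, ← mul_assoc, inv_mul_cancel₀ (sqrt_ne v hv), one_mul,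
    two_b_inv v hv]

lemma gauss_moment_four (v : ℝ≥0) (hv : v ≠ 0) :
    ∫ x, x ^ 4 ∂(gaussianReal 0 v) = 3 * (v : ℝ) ^ 2 := by
  rw [integral_pow_gaussianReal v hv, integral_pow_mul_exp_four (bpos v hv), pi_div_b v hv]
  have h1 : 3 / (2 * (2 * (v : ℝ))⁻¹) = 3 * (v : ℝ) := by
    rw [div_eq_mul_inv, two_b_inv v hv]
  rw [h1, div_eq_mul_inv, ← mul_assoc, two_b_inv v hv]
  field_simp

lemma pow_integrable_of_law {Ω : Type*} [MeasureSpace Ω] [IsProbabilityMeasure (ℙ : Measure Ω)]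
    {X : Ω → ℝ} (hX : Measurable X) {v : ℝ≥0} (hv : v ≠ 0)
    (hlaw : Measure.map X ℙ = gaussianReal 0 v) (n : ℕ) :
    Integrable (fun ω => X ω ^ n) ℙ := by
  have hint := integrable_pow_gaussianReal v hv n
  rw [← hlaw] at hint
  exact (integrable_map_measure (measurable_id.pow_const n).aestronglyMeasurable
    hX.aemeasurable).mp hint

lemma pow_integral_of_law {Ω : Type*} [MeasureSpace Ω] [IsProbabilityMeasure (ℙ : Measure Ω)]
    {X : Ω → ℝ} (hX : Measurable X) {v : ℝ≥0}
    (hlaw : Measure.map X ℙ = gaussianReal 0 v) (n : ℕ) :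
    ∫ ω, X ω ^ n ∂ℙ = ∫ x, x ^ n ∂(gaussianReal 0 v) := by
  have hg : Measurable fun x : ℝ => x ^ n := measurable_id.pow_const n
  rw [← hlaw, integral_map hX.aemeasurable hg.aestronglyMeasurable]

end GaussMomentAux

open GaussMomentAux in
/-- Equations (93)–(95) of Appendix II: variance of the weaker user's centralized
per-symbol information density in the superposed block. -/
theorem variance_weaker_user_information_density
    {Ω : Type*} [MeasureSpace Ω] [IsProbabilityMeasure (ℙ : Measure Ω)]
    (h P₁ P₂ : ℝ) (hh : 0 < h) (hP₁ : 0 < P₁) (hP₂ : 0 ≤ P₂)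
    (X Z : Ω → ℝ) (hXmeas : Measurable X) (hZmeas : Measurable Z)
    (hXZ : IndepFun X Z ℙ)
    (hXlaw : Measure.map X ℙ = gaussianReal 0 P₁.toNNReal)
    (hZlaw : Measure.map Z ℙ = gaussianReal 0 (1 + h * P₂).toNNReal) :
    variance (fun ω => (Real.logb 2 (Real.exp 1) / (2 * (1 + h * (P₁ + P₂)))) *
        (h * (X ω ^ 2 - P₁ / (1 + h * P₂) * Z ω ^ 2) +
          2 * Real.sqrt h * X ω * Z ω)) ℙ =
      Real.logb 2 (Real.exp 1) ^ 2 * h * P₁ / (1 + h * (P₁ + P₂)) := by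
  have hv2 : (0 : ℝ) < 1 + h * P₂ := by positivity
  have hK : (0 : ℝ) < 1 + h * (P₁ + P₂) := by positivity
  have hv1ne : P₁.toNNReal ≠ 0 := by
    simp only [ne_eq, Real.toNNReal_eq_zero, not_le]
    exact hP₁
  have hv2ne : (1 + h * P₂).toNNReal ≠ 0 := by
    simp only [ne_eq, Real.toNNReal_eq_zero, not_le]
    exact hv2
  have hc1 : ((P₁.toNNReal : ℝ≥0) : ℝ) = P₁ := Real.coe_toNNReal _ hP₁.le
  have hc2 : (((1 + h * P₂).toNNReal : ℝ≥0) : ℝ) = 1 + h * P₂ := Real.coe_toNNReal _ hv2.le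
  -- moments of X
  have intX : ∀ n, Integrable (fun ω => X ω ^ n) ℙ :=
    fun n => pow_integrable_of_law hXmeas hv1ne hXlaw n
  have intZ : ∀ n, Integrable (fun ω => Z ω ^ n) ℙ :=
    fun n => pow_integrable_of_law hZmeas hv2ne hZlaw n
  have mX1 : ∫ ω, X ω ^ 1 ∂ℙ = 0 := by
    rw [pow_integral_of_law hXmeas hXlaw, gauss_moment_one _ hv1ne]
  have mX2 : ∫ ω, X ω ^ 2 ∂ℙ = P₁ := by
    rw [pow_integral_of_law hXmeas hXlaw, gauss_moment_two _ hv1ne, hc1]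
  have mX3 : ∫ ω, X ω ^ 3 ∂ℙ = 0 := by
    rw [pow_integral_of_law hXmeas hXlaw, gauss_moment_three _ hv1ne]
  have mX4 : ∫ ω, X ω ^ 4 ∂ℙ = 3 * P₁ ^ 2 := by
    rw [pow_integral_of_law hXmeas hXlaw, gauss_moment_four _ hv1ne, hc1]
  have mZ1 : ∫ ω, Z ω ^ 1 ∂ℙ = 0 := by
    rw [pow_integral_of_law hZmeas hZlaw, gauss_moment_one _ hv2ne]
  have mZ2 : ∫ ω, Z ω ^ 2 ∂ℙ = 1 + h * P₂ := by
    rw [pow_integral_of_law hZmeas hZlaw, gauss_moment_two _ hv2ne, hc2]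
  have mZ3 : ∫ ω, Z ω ^ 3 ∂ℙ = 0 := by
    rw [pow_integral_of_law hZmeas hZlaw, gauss_moment_three _ hv2ne]
  have mZ4 : ∫ ω, Z ω ^ 4 ∂ℙ = 3 * (1 + h * P₂) ^ 2 := by
    rw [pow_integral_of_law hZmeas hZlaw, gauss_moment_four _ hv2ne, hc2]
  -- products
  have indep : ∀ i j : ℕ, IndepFun (fun ω => X ω ^ i) (fun ω => Z ω ^ j) ℙ :=
    fun i j => hXZ.comp (measurable_id.pow_const i) (measurable_id.pow_const j)
  have intP : ∀ i j : ℕ, Integrable (fun ω => X ω ^ i * Z ω ^ j) ℙ :=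
    fun i j => (indep i j).integrable_mul (intX i) (intZ j)
  have mP : ∀ i j : ℕ, ∫ ω, X ω ^ i * Z ω ^ j ∂ℙ = (∫ ω, X ω ^ i ∂ℙ) * ∫ ω, Z ω ^ j ∂ℙ :=
    fun i j => (indep i j).integral_mul_eq_mul_integral (intX i).aestronglyMeasurable (intZ j).aestronglyMeasurable
  set L := Real.logb 2 (Real.exp 1) with hL
  set a : ℝ := P₁ / (1 + h * P₂) with ha
  set c : ℝ := L / (2 * (1 + h * (P₁ + P₂))) with hc
  set W : Ω → ℝ := fun ω =>
    h * (X ω ^ 2 - a * Z ω ^ 2) + 2 * Real.sqrt h * X ω * Z ω with hW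
  have hWmeas : Measurable W := by
    apply Measurable.add
    · exact (((hXmeas.pow_const 2).sub ((hZmeas.pow_const 2).const_mul a)).const_mul h)
    · exact (hXmeas.const_mul _).mul hZmeas
  have hs : Real.sqrt h ^ 2 = h := Real.sq_sqrt hh.le
  -- expectation of W
  have hWeq : W = fun ω =>
      h * (X ω ^ 2) + ((-(h * a)) * (Z ω ^ 2) + (2 * Real.sqrt h) * (X ω ^ 1 * Z ω ^ 1)) := by
    funext ω
    simp only [hW]
    ring
  have intW : Integrable W ℙ := by
    rw [hWeq]
    exact ((intX 2).const_mul _).add (((intZ 2).const_mul _).add ((intP 1 1).const_mul _))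
  have i1 : Integrable (fun ω => h * X ω ^ 2) ℙ := (intX 2).const_mul _
  have i2 : Integrable (fun ω => -(h * a) * Z ω ^ 2) ℙ := (intZ 2).const_mul _
  have i3 : Integrable (fun ω => 2 * Real.sqrt h * (X ω ^ 1 * Z ω ^ 1)) ℙ :=
    (intP 1 1).const_mul _
  have i23 : Integrable
      (fun ω => -(h * a) * Z ω ^ 2 + 2 * Real.sqrt h * (X ω ^ 1 * Z ω ^ 1)) ℙ := i2.add i3
  have EW : ∫ ω, W ω ∂ℙ = 0 := by
    rw [hWeq]
    rw [integral_add i1 i23, integral_add i2 i3,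
      integral_const_mul, integral_const_mul, integral_const_mul, mX2, mZ2, mP 1 1, mX1, mZ1, ha]
    field_simp
    ring
  -- second moment of W
  have hW2eq : (fun ω => W ω ^ 2) = fun ω =>
      h ^ 2 * (X ω ^ 4) + ((4 * h - 2 * h ^ 2 * a) * (X ω ^ 2 * Z ω ^ 2)
        + (h ^ 2 * a ^ 2 * (Z ω ^ 4) + ((4 * h * Real.sqrt h) * (X ω ^ 3 * Z ω ^ 1)
          + (-(4 * h * Real.sqrt h * a)) * (X ω ^ 1 * Z ω ^ 3)))) := by
    funext ω
    simp only [hW]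
    linear_combination (4 * X ω ^ 2 * Z ω ^ 2) * hs
  have intW2 : Integrable (fun ω => W ω ^ 2) ℙ := by
    rw [hW2eq]
    exact ((intX 4).const_mul _).add (((intP 2 2).const_mul _).add
      (((intZ 4).const_mul _).add (((intP 3 1).const_mul _).add ((intP 1 3).const_mul _))))
  have j1 : Integrable (fun ω => h ^ 2 * X ω ^ 4) ℙ := (intX 4).const_mul _
  have j2 : Integrable (fun ω => (4 * h - 2 * h ^ 2 * a) * (X ω ^ 2 * Z ω ^ 2)) ℙ :=
    (intP 2 2).const_mul _
  have j3 : Integrable (fun ω => h ^ 2 * a ^ 2 * Z ω ^ 4) ℙ := (intZ 4).const_mul _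
  have j4 : Integrable (fun ω => 4 * h * Real.sqrt h * (X ω ^ 3 * Z ω ^ 1)) ℙ :=
    (intP 3 1).const_mul _
  have j5 : Integrable (fun ω => -(4 * h * Real.sqrt h * a) * (X ω ^ 1 * Z ω ^ 3)) ℙ :=
    (intP 1 3).const_mul _
  have j45 : Integrable (fun ω => 4 * h * Real.sqrt h * (X ω ^ 3 * Z ω ^ 1)
      + -(4 * h * Real.sqrt h * a) * (X ω ^ 1 * Z ω ^ 3)) ℙ := j4.add j5
  have j345 : Integrable (fun ω => h ^ 2 * a ^ 2 * Z ω ^ 4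
      + (4 * h * Real.sqrt h * (X ω ^ 3 * Z ω ^ 1)
        + -(4 * h * Real.sqrt h * a) * (X ω ^ 1 * Z ω ^ 3))) ℙ := j3.add j45
  have j2345 : Integrable (fun ω => (4 * h - 2 * h ^ 2 * a) * (X ω ^ 2 * Z ω ^ 2)
      + (h ^ 2 * a ^ 2 * Z ω ^ 4 + (4 * h * Real.sqrt h * (X ω ^ 3 * Z ω ^ 1)
        + -(4 * h * Real.sqrt h * a) * (X ω ^ 1 * Z ω ^ 3)))) ℙ := j2.add j345
  have EW2 : ∫ ω, W ω ^ 2 ∂ℙ = 4 * h * P₁ * (1 + h * (P₁ + P₂)) := by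
    rw [hW2eq,
      integral_add j1 j2345, integral_add j2 j345, integral_add j3 j45, integral_add j4 j5,
      integral_const_mul, integral_const_mul, integral_const_mul, integral_const_mul,
      integral_const_mul, mX4, mZ4, mP 2 2, mP 3 1, mP 1 3, mX2, mZ2, mX3, mZ3, mX1, mZ1, ha]
    field_simp
    ring
  -- variance
  have hmem : MemLp W 2 ℙ := (memLp_two_iff_integrable_sq hWmeas.aestronglyMeasurable).2 intW2
  have hgoal : variance (fun ω => c * W ω) ℙ = c ^ 2 * variance W ℙ := variance_const_mul c W ℙ
  show variance (fun ω => c * W ω) ℙ = L ^ 2 * h * P₁ / (1 + h * (P₁ + P₂))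
  rw [hgoal, variance_eq_sub hmem]
  have h1 : ℙ[W ^ 2] = ∫ ω, W ω ^ 2 ∂ℙ := rfl
  have h2 : ℙ[W] = ∫ ω, W ω ∂ℙ := rfl
  rw [h1, h2, EW, EW2]
  rw [hc]
  field_simp
  ring
end

section
/- Let h > 0, P₁ > 0, P₂ ≥ 0, and let integers n₁ ≥ n₂ ≥ 1 be given; set p := n₂/n₁. Let X₁,…,X_{n₁}, Z̃₁,…,Z̃_{n₁} be 2n₁ mutually independent real random variables on a probability space (Ω, 𝒜, ℙ), with Xⱼ distributed as N(0,P₁) for all j, Z̃ⱼ distributed as N(0, 1+hP₂) for 1 ≤ j ≤ n₂, and Z̃ⱼ distributed as N(0,1) for n₂ < j ≤ n₁. Define S := Σ_{j=1}^{n₂} (log₂ e/(2(1+h(P₁+P₂))))·( h(Xⱼ² − (P₁/(1+hP₂))·Z̃ⱼ²) + 2√h·Xⱼ·Z̃ⱼ ) + Σ_{j=n₂+1}^{n₁} (log₂ e/(2(1+hP₁)))·( h(Xⱼ² − P₁·Z̃ⱼ²) + 2√h·Xⱼ·Z̃ⱼ ). Then (1/n₁)·Var[S] = (log₂ e)² ·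 ( p·hP₁/(1 + h(P₁+P₂)) + (1−p)·hP₁/(1 + hP₁) ). -/
open MeasureTheory ProbabilityTheory Real

lemma integrable_pow_mul_exp {b : ℝ} (hb : 0 < b) (k : ℕ) :
    Integrable (fun x : ℝ => x ^ k * Real.exp (-b * x ^ 2)) := by
  have hmeas : AEStronglyMeasurable (fun x : ℝ => x ^ k * Real.exp (-b * x ^ 2)) volume :=
    ((measurable_id.pow_const k).mul
      (((measurable_id.pow_const 2).const_mul (-b)).exp)).aestronglyMeasurable
  refine Integrable.mono'
    ((integrable_exp_neg_mul_sq (half_pos hb)).const_mul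
      ((k.factorial : ℝ) * Real.exp (1 / (2 * b)))) hmeas ?_
  filter_upwards with x
  have h1 : |x| ^ k ≤ (k.factorial : ℝ) * Real.exp |x| := by
    have := Real.pow_div_factorial_le_exp |x| (abs_nonneg x) k
    rw [div_le_iff₀ (by positivity : (0:ℝ) < k.factorial)] at this
    linarith
  have key : 2 * b * |x| ≤ 1 + b ^ 2 * x ^ 2 := by
    nlinarith [sq_nonneg (b * |x| - 1), sq_abs x]
  have h3 : |x| ≤ 1 / (2 * b) + b / 2 * x ^ 2 := by
    have h5 : 2 * b * (1 / (2 * b) + b / 2 * x ^ 2) = 1 + b ^ 2 * x ^ 2 := by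
      field_simp
    have h4 : 2 * b * |x| ≤ 2 * b * (1 / (2 * b) + b / 2 * x ^ 2) := by
      rw [h5]; exact key
    exact le_of_mul_le_mul_left h4 (by positivity)
  have h2 : Real.exp (|x| + -b * x ^ 2) ≤
      Real.exp (1 / (2 * b)) * Real.exp (-(b / 2) * x ^ 2) := by
    rw [← Real.exp_add]
    apply Real.exp_le_exp.2
    linarith
  calc ‖x ^ k * Real.exp (-b * x ^ 2)‖ = |x| ^ k * Real.exp (-b * x ^ 2) := by
        rw [norm_mul, norm_pow, Real.norm_eq_abs, Real.norm_eq_abs,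
          abs_of_pos (Real.exp_pos _)]
    _ ≤ (k.factorial : ℝ) * Real.exp |x| * Real.exp (-b * x ^ 2) := by
        gcongr
    _ = (k.factorial : ℝ) * Real.exp (|x| + -b * x ^ 2) := by
        rw [mul_assoc, ← Real.exp_add]
    _ ≤ (k.factorial : ℝ) * (Real.exp (1 / (2 * b)) * Real.exp (-(b / 2) * x ^ 2)) := by
        gcongr
    _ = (k.factorial : ℝ) * Real.exp (1 / (2 * b)) * Real.exp (-(b / 2) * x ^ 2) := by
        ring

open scoped ENNReal NNReal

lemma gpdf_eq (v : ℝ≥0) (x : ℝ) :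
    gaussianPDFReal 0 v x
      = (Real.sqrt (2 * π * v))⁻¹ * Real.exp (-(2 * (v : ℝ))⁻¹ * x ^ 2) := by
  rw [gaussianPDFReal, sub_zero]
  congr 1
  ring

lemma integral_gauss (v : ℝ≥0) (hv : v ≠ 0) (g : ℝ → ℝ) :
    ∫ x, g x ∂(gaussianReal 0 v) = ∫ x, gaussianPDFReal 0 v x * g x := by
  rw [gaussianReal_of_var_ne_zero 0 hv, gaussianPDF_def]
  have h1 : (fun x => ENNReal.ofReal (gaussianPDFReal 0 v x))
      = fun x => ((Real.toNNReal (gaussianPDFReal 0 v x) : ℝ≥0) : ℝ≥0∞) := rfl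
  rw [h1, integral_withDensity_eq_integral_smul₀
    ((measurable_gaussianPDFReal 0 v).real_toNNReal.aemeasurable) g]
  congr 1
  funext x
  rw [NNReal.smul_def, Real.coe_toNNReal _ (gaussianPDFReal_nonneg 0 v x), smul_eq_mul]

lemma integrable_gauss (v : ℝ≥0) (hv : v ≠ 0) {g : ℝ → ℝ}
    (hg : Integrable (fun x => gaussianPDFReal 0 v x * g x)) :
    Integrable g (gaussianReal 0 v) := by
  rw [gaussianReal_of_var_ne_zero 0 hv, gaussianPDF_def]
  have h1 : (fun x => ENNReal.ofReal (gaussianPDFReal 0 v x))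
      = fun x => ((Real.toNNReal (gaussianPDFReal 0 v x) : ℝ≥0) : ℝ≥0∞) := rfl
  rw [h1, integrable_withDensity_iff_integrable_smul₀
    ((measurable_gaussianPDFReal 0 v).real_toNNReal.aemeasurable)]
  refine hg.congr (Filter.Eventually.of_forall fun x => ?_)
  simp only [NNReal.smul_def, Real.coe_toNNReal _ (gaussianPDFReal_nonneg 0 v x), smul_eq_mul]

lemma integrable_pow_gauss (v : ℝ≥0) (hv : v ≠ 0) (k : ℕ) :
    Integrable (fun x => x ^ k) (gaussianReal 0 v) := by
  have hvpos : (0 : ℝ) < (v : ℝ) := by exact_mod_cast pos_iff_ne_zero.mpr hv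
  apply integrable_gauss v hv
  have hb : (0:ℝ) < (2 * (v : ℝ))⁻¹ := by positivity
  refine ((integrable_pow_mul_exp hb k).const_mul ((Real.sqrt (2 * π * v))⁻¹)).congr
    (Filter.Eventually.of_forall fun x => ?_)
  simp only [gpdf_eq]
  ring

lemma integral_even_pow_mul_exp {b : ℝ} (hb : 0 < b) (m : ℕ) :
    ∫ x : ℝ, x ^ (2 * m) * Real.exp (-b * x ^ 2)
      = 2 * (b ^ (-(2 * (m : ℝ) + 1) / 2) * (1 / 2) * Real.Gamma ((2 * (m : ℝ) + 1) / 2)) := by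
  have h1 : ∀ x : ℝ, x ^ (2 * m) * Real.exp (-b * x ^ 2)
      = |x| ^ (2 * m) * Real.exp (-b * |x| ^ 2) := by
    intro x
    rw [pow_mul, pow_mul, sq_abs]
  calc ∫ x : ℝ, x ^ (2 * m) * Real.exp (-b * x ^ 2)
      = ∫ x : ℝ, |x| ^ (2 * m) * Real.exp (-b * |x| ^ 2) := by
        congr 1; funext x; exact h1 x
    _ = 2 * ∫ x in Set.Ioi (0:ℝ), x ^ (2 * m) * Real.exp (-b * x ^ 2) :=
        integral_comp_abs (f := fun x => x ^ (2 * m) * Real.exp (-b * x ^ 2))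
    _ = 2 * ∫ x in Set.Ioi (0:ℝ), x ^ ((2 * (m : ℝ)) : ℝ) * Real.exp (-b * x ^ ((2:ℝ) : ℝ)) := by
        congr 1
        refine setIntegral_congr_fun measurableSet_Ioi (fun x hx => ?_)
        rw [show ((2 * (m : ℝ)) : ℝ) = ((2 * m : ℕ) : ℝ) by push_cast; ring,
          Real.rpow_natCast, show ((2:ℝ) : ℝ) = ((2 : ℕ) : ℝ) by norm_num, Real.rpow_natCast]
    _ = 2 * (b ^ (-(2 * (m : ℝ) + 1) / 2) * (1 / 2) * Real.Gamma ((2 * (m : ℝ) + 1) / 2)) := by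
        rw [integral_rpow_mul_exp_neg_mul_rpow (by norm_num)
          (by have := Nat.cast_nonneg (α := ℝ) m; linarith) hb]

lemma integral_id_gauss (v : ℝ≥0) (hv : v ≠ 0) :
    ∫ x, x ∂(gaussianReal 0 v) = 0 := by
  rw [integral_gauss v hv]
  have h : ∀ x : ℝ, gaussianPDFReal 0 v (-x) * (-x) = -(gaussianPDFReal 0 v x * x) := by
    intro x
    have hx2 : ((-x) : ℝ) ^ 2 = x ^ 2 := by ring
    rw [gpdf_eq, gpdf_eq, hx2]
    ring
  have h2 := integral_neg_eq_self (fun x => gaussianPDFReal 0 v x * x) (volume : Measure ℝ)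
  have h3 : ∫ x : ℝ, gaussianPDFReal 0 v (-x) * (-x) = -∫ x : ℝ, gaussianPDFReal 0 v x * x := by
    rw [← integral_neg]
    congr 1; funext x; exact h x
  rw [h3] at h2
  linarith

lemma sqrt_two_pi_v (v : ℝ≥0) : Real.sqrt (2 * π * (v : ℝ)) = Real.sqrt π * Real.sqrt (2 * (v : ℝ)) := by
  rw [show 2 * π * (v : ℝ) = π * (2 * (v : ℝ)) by ring, Real.sqrt_mul pi_pos.le]

lemma integral_even_gauss_aux (v : ℝ≥0) (hv : v ≠ 0) (m : ℕ) :
    ∫ x, x ^ (2 * m) ∂(gaussianReal 0 v)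
      = (Real.sqrt π * Real.sqrt (2 * (v : ℝ)))⁻¹ *
        (2 * (((2 * (v : ℝ))⁻¹) ^ (-(2 * (m : ℝ) + 1) / 2) * (1 / 2) *
          Real.Gamma ((2 * (m : ℝ) + 1) / 2))) := by
  have hvpos : (0 : ℝ) < (v : ℝ) := by exact_mod_cast pos_iff_ne_zero.mpr hv
  have hb : (0:ℝ) < (2 * (v : ℝ))⁻¹ := by positivity
  rw [integral_gauss v hv]
  have h1 : (fun x : ℝ => gaussianPDFReal 0 v x * x ^ (2 * m))
      = fun x => (Real.sqrt (2 * π * (v:ℝ)))⁻¹ *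
          (x ^ (2 * m) * Real.exp (-(2 * (v : ℝ))⁻¹ * x ^ 2)) := by
    funext x
    rw [gpdf_eq]
    ring
  rw [h1, integral_const_mul, integral_even_pow_mul_exp hb m, sqrt_two_pi_v]

lemma inv_rpow_neg_eq (s : ℝ) (hs : 0 < s) (r : ℝ) : (s⁻¹) ^ (-r) = s ^ r := by
  rw [Real.inv_rpow hs.le, Real.rpow_neg hs.le, inv_inv]

lemma integral_sq_gauss (v : ℝ≥0) (hv : v ≠ 0) :
    ∫ x, x ^ 2 ∂(gaussianReal 0 v) = (v : ℝ) := by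
  have hvpos : (0 : ℝ) < (v : ℝ) := by exact_mod_cast pos_iff_ne_zero.mpr hv
  have hspos : (0:ℝ) < 2 * (v : ℝ) := by positivity
  have h := integral_even_gauss_aux v hv 1
  rw [show (2 * 1 : ℕ) = 2 by norm_num] at h
  rw [h, show -(2 * ((1:ℕ) : ℝ) + 1) / 2 = -(3/2) by norm_num,
    inv_rpow_neg_eq _ hspos,
    show ((3:ℝ)/2) = 1 + 1/2 by norm_num,
    Real.rpow_add hspos, Real.rpow_one, ← Real.sqrt_eq_rpow,
    show (2 * ((1:ℕ) : ℝ) + 1) / 2 = 1/2 + 1 by norm_num,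
    Real.Gamma_add_one (by norm_num), Real.Gamma_one_half_eq]
  have hA : (0:ℝ) < Real.sqrt (2 * (v : ℝ)) := Real.sqrt_pos.2 hspos
  have hB : (0:ℝ) < Real.sqrt π := Real.sqrt_pos.2 pi_pos
  field_simp

lemma integral_pow4_gauss (v : ℝ≥0) (hv : v ≠ 0) :
    ∫ x, x ^ 4 ∂(gaussianReal 0 v) = 3 * (v : ℝ) ^ 2 := by
  have hvpos : (0 : ℝ) < (v : ℝ) := by exact_mod_cast pos_iff_ne_zero.mpr hv
  have hspos : (0:ℝ) < 2 * (v : ℝ) := by positivity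
  have h := integral_even_gauss_aux v hv 2
  rw [show (2 * 2 : ℕ) = 4 by norm_num] at h
  rw [h, show -(2 * ((2:ℕ) : ℝ) + 1) / 2 = -(5/2) by norm_num,
    inv_rpow_neg_eq _ hspos,
    show ((5:ℝ)/2) = 2 + 1/2 by norm_num,
    Real.rpow_add hspos, Real.rpow_two,
    ← Real.sqrt_eq_rpow,
    show (2 * ((2:ℕ) : ℝ) + 1) / 2 = 3/2 + 1 by norm_num,
    Real.Gamma_add_one (by norm_num),
    show ((3:ℝ)/2) = 1/2 + 1 by norm_num,
    Real.Gamma_add_one (by norm_num), Real.Gamma_one_half_eq]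
  have hA : (0:ℝ) < Real.sqrt (2 * (v : ℝ)) := Real.sqrt_pos.2 hspos
  have hAA : Real.sqrt (2 * (v : ℝ)) * Real.sqrt (2 * (v : ℝ)) = 2 * (v : ℝ) :=
    Real.mul_self_sqrt hspos.le
  have hB : (0:ℝ) < Real.sqrt π := Real.sqrt_pos.2 pi_pos
  field_simp
  nlinarith [hAA, hA, hB]

section RV

variable {Ω : Type*} [MeasureSpace Ω] [IsProbabilityMeasure (ℙ : Measure Ω)]

lemma pow_integrable (U : Ω → ℝ) (hU : Measurable U) (v : ℝ≥0) (hv : v ≠ 0)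
    (hl : Measure.map U ℙ = gaussianReal 0 v) (k : ℕ) :
    Integrable (fun ω => U ω ^ k) ℙ := by
  have h := integrable_pow_gauss v hv k
  rw [← hl] at h
  have := (integrable_map_measure ((measurable_id.pow_const k).aestronglyMeasurable)
    hU.aemeasurable).mp h
  exact this

lemma pow_integral (U : Ω → ℝ) (hU : Measurable U) (v : ℝ≥0)
    (hl : Measure.map U ℙ = gaussianReal 0 v) (k : ℕ) :
    ∫ ω, U ω ^ k ∂ℙ = ∫ x, x ^ k ∂(gaussianReal 0 v) := by
  rw [← hl]
  exact (integral_map hU.aemeasurable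
    (by fun_prop : AEStronglyMeasurable (fun x : ℝ => x ^ k) (Measure.map U ℙ))).symm

lemma var_quad (U W : Ω → ℝ) (hU : Measurable U) (hW : Measurable W)
    (hUW : IndepFun U W ℙ) (a b : ℝ) (ha : 0 < a) (hb : 0 < b)
    (hUl : Measure.map U ℙ = gaussianReal 0 a.toNNReal)
    (hWl : Measure.map W ℙ = gaussianReal 0 b.toNNReal) (α β γ : ℝ) :
    MemLp (fun ω => α * U ω ^ 2 + β * W ω ^ 2 + γ * (U ω * W ω)) 2 ℙ ∧
    variance (fun ω => α * U ω ^ 2 + β * W ω ^ 2 + γ * (U ω * W ω)) ℙ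
      = 2 * α ^ 2 * a ^ 2 + 2 * β ^ 2 * b ^ 2 + γ ^ 2 * (a * b) := by
  have hva : (a.toNNReal : ℝ) = a := Real.coe_toNNReal a ha.le
  have hvb : (b.toNNReal : ℝ) = b := Real.coe_toNNReal b hb.le
  have hva0 : a.toNNReal ≠ 0 := by
    simp only [ne_eq, Real.toNNReal_eq_zero, not_le]; exact ha
  have hvb0 : b.toNNReal ≠ 0 := by
    simp only [ne_eq, Real.toNNReal_eq_zero, not_le]; exact hb
  -- integrability of powers
  have IU : ∀ k, Integrable (fun ω => U ω ^ k) ℙ := pow_integrable U hU _ hva0 hUl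
  have IW : ∀ k, Integrable (fun ω => W ω ^ k) ℙ := pow_integrable W hW _ hvb0 hWl
  have IU1 : Integrable U ℙ := by simpa using IU 1
  have IW1 : Integrable W ℙ := by simpa using IW 1
  -- moments
  have EU1 : ∫ ω, U ω ∂ℙ = 0 := by
    have := pow_integral U hU _ hUl 1
    simpa [integral_id_gauss _ hva0] using this
  have EW1 : ∫ ω, W ω ∂ℙ = 0 := by
    have := pow_integral W hW _ hWl 1
    simpa [integral_id_gauss _ hvb0] using this
  have EU2 : ∫ ω, U ω ^ 2 ∂ℙ = a := by
    rw [pow_integral U hU _ hUl 2, integral_sq_gauss _ hva0, hva]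
  have EW2 : ∫ ω, W ω ^ 2 ∂ℙ = b := by
    rw [pow_integral W hW _ hWl 2, integral_sq_gauss _ hvb0, hvb]
  have EU4 : ∫ ω, U ω ^ 4 ∂ℙ = 3 * a ^ 2 := by
    rw [pow_integral U hU _ hUl 4, integral_pow4_gauss _ hva0, hva]
  have EW4 : ∫ ω, W ω ^ 4 ∂ℙ = 3 * b ^ 2 := by
    rw [pow_integral W hW _ hWl 4, integral_pow4_gauss _ hvb0, hvb]
  -- independence of powers
  have hcomp : ∀ m n : ℕ, IndepFun (fun ω => U ω ^ m) (fun ω => W ω ^ n) ℙ :=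
    fun m n => hUW.comp (measurable_id.pow_const m) (measurable_id.pow_const n)
  have hcomp1 : ∀ m : ℕ, IndepFun (fun ω => U ω ^ m) W ℙ :=
    fun m => hUW.comp (measurable_id.pow_const m) measurable_id
  have hcomp1' : ∀ n : ℕ, IndepFun U (fun ω => W ω ^ n) ℙ :=
    fun n => hUW.comp measurable_id (measurable_id.pow_const n)
  -- integrability of products
  have IUW : Integrable (fun ω => U ω * W ω) ℙ := hUW.integrable_mul IU1 IW1
  have IU2W2 : Integrable (fun ω => U ω ^ 2 * W ω ^ 2) ℙ := (hcomp 2 2).integrable_mul (IU 2) (IW 2)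
  have IU3W : Integrable (fun ω => U ω ^ 3 * W ω) ℙ := (hcomp1 3).integrable_mul (IU 3) IW1
  have IUW3 : Integrable (fun ω => U ω * W ω ^ 3) ℙ := (hcomp1' 3).integrable_mul IU1 (IW 3)
  -- product moments
  have EUW : ∫ ω, U ω * W ω ∂ℙ = 0 := by
    rw [hUW.integral_fun_mul_eq_mul_integral hU.aestronglyMeasurable hW.aestronglyMeasurable, EU1, zero_mul]
  have EU2W2 : ∫ ω, U ω ^ 2 * W ω ^ 2 ∂ℙ = a * b := by
    rw [(hcomp 2 2).integral_fun_mul_eq_mul_integral (hU.pow_const 2).aestronglyMeasurable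
      (hW.pow_const 2).aestronglyMeasurable, EU2, EW2]
  have EU3W : ∫ ω, U ω ^ 3 * W ω ∂ℙ = 0 := by
    rw [(hcomp1 3).integral_fun_mul_eq_mul_integral (hU.pow_const 3).aestronglyMeasurable
      hW.aestronglyMeasurable, EW1, mul_zero]
  have EUW3 : ∫ ω, U ω * W ω ^ 3 ∂ℙ = 0 := by
    rw [(hcomp1' 3).integral_fun_mul_eq_mul_integral hU.aestronglyMeasurable
      (hW.pow_const 3).aestronglyMeasurable, EU1, zero_mul]
  -- the function and its square
  set f : Ω → ℝ := fun ω => α * U ω ^ 2 + β * W ω ^ 2 + γ * (U ω * W ω) with hf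
  have hfmeas : Measurable f := by
    apply Measurable.add
    apply Measurable.add
    · exact (hU.pow_const 2).const_mul α
    · exact (hW.pow_const 2).const_mul β
    · exact (hU.mul hW).const_mul γ
  have Isq : Integrable (fun ω => f ω ^ 2) ℙ := by
    have hexp : (fun ω => f ω ^ 2) = (fun ω =>
        α ^ 2 * U ω ^ 4 + β ^ 2 * W ω ^ 4 + (γ ^ 2 + 2 * α * β) * (U ω ^ 2 * W ω ^ 2)
          + 2 * α * γ * (U ω ^ 3 * W ω) + 2 * β * γ * (U ω * W ω ^ 3)) := by
      funext ω; simp only [hf]; ring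
    rw [hexp]
    exact (((((IU 4).const_mul _).add ((IW 4).const_mul _)).add
      (IU2W2.const_mul _)).add (IU3W.const_mul _)).add (IUW3.const_mul _)
  have hmem : MemLp f 2 ℙ := (memLp_two_iff_integrable_sq hfmeas.aestronglyMeasurable).2 Isq
  refine ⟨hmem, ?_⟩
  rw [variance_eq_sub hmem]
  have hE : ∫ ω, f ω ∂ℙ = α * a + β * b := by
    simp only [hf]
    have I1 : Integrable (fun ω => α * U ω ^ 2 + β * W ω ^ 2) ℙ :=
      ((IU 2).const_mul α).add ((IW 2).const_mul β)
    rw [integral_add I1 (IUW.const_mul γ),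
      integral_add ((IU 2).const_mul α) ((IW 2).const_mul β),
      integral_const_mul, integral_const_mul, integral_const_mul, EU2, EW2, EUW]
    ring
  have hE2 : ∫ ω, f ω ^ 2 ∂ℙ
      = α ^ 2 * (3 * a ^ 2) + β ^ 2 * (3 * b ^ 2) + (γ ^ 2 + 2 * α * β) * (a * b) := by
    have hexp : (fun ω => f ω ^ 2) = (fun ω =>
        α ^ 2 * U ω ^ 4 + β ^ 2 * W ω ^ 4 + (γ ^ 2 + 2 * α * β) * (U ω ^ 2 * W ω ^ 2)
          + 2 * α * γ * (U ω ^ 3 * W ω) + 2 * β * γ * (U ω * W ω ^ 3)) := by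
      funext ω; simp only [hf]; ring
    calc ∫ ω, f ω ^ 2 ∂ℙ
        = ∫ ω, (α ^ 2 * U ω ^ 4 + β ^ 2 * W ω ^ 4 + (γ ^ 2 + 2 * α * β) * (U ω ^ 2 * W ω ^ 2)
          + 2 * α * γ * (U ω ^ 3 * W ω) + 2 * β * γ * (U ω * W ω ^ 3)) ∂ℙ := by rw [hexp]
      _ = α ^ 2 * (3 * a ^ 2) + β ^ 2 * (3 * b ^ 2) + (γ ^ 2 + 2 * α * β) * (a * b) := by
          have IAB : Integrable (fun ω => α ^ 2 * U ω ^ 4 + β ^ 2 * W ω ^ 4) ℙ :=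
            ((IU 4).const_mul _).add ((IW 4).const_mul _)
          have IABC : Integrable (fun ω => α ^ 2 * U ω ^ 4 + β ^ 2 * W ω ^ 4
              + (γ ^ 2 + 2 * α * β) * (U ω ^ 2 * W ω ^ 2)) ℙ :=
            IAB.add (IU2W2.const_mul _)
          have IABCD : Integrable (fun ω => α ^ 2 * U ω ^ 4 + β ^ 2 * W ω ^ 4
              + (γ ^ 2 + 2 * α * β) * (U ω ^ 2 * W ω ^ 2)
              + 2 * α * γ * (U ω ^ 3 * W ω)) ℙ :=
            IABC.add (IU3W.const_mul _)
          rw [integral_add IABCD (IUW3.const_mul _),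
            integral_add IABC (IU3W.const_mul _),
            integral_add IAB (IU2W2.const_mul _),
            integral_add ((IU 4).const_mul _) ((IW 4).const_mul _),
            integral_const_mul, integral_const_mul, integral_const_mul, integral_const_mul,
            integral_const_mul, EU4, EW4, EU2W2, EU3W, EUW3]
          ring
  have hpow : (f ^ 2 : Ω → ℝ) = fun ω => f ω ^ 2 := rfl
  rw [hpow, hE2, hE]
  ring

end RV

/-- Dispersion of the weaker user (equations (14) and (97)): the normalized
variance of the centralized information density over the heterogeneous block
equals `(log₂e)² (p·hP₁/(1+h(P₁+P₂)) + (1-p)·hP₁/(1+hP₁))` with `p = n₂/n₁`. -/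
theorem dispersion_weaker_user
    {Ω : Type*} [MeasureSpace Ω] [IsProbabilityMeasure (ℙ : Measure Ω)]
    (h P₁ P₂ : ℝ) (hh : 0 < h) (hP₁ : 0 < P₁) (hP₂ : 0 ≤ P₂)
    (n₁ n₂ : ℕ) (hn₂ : 1 ≤ n₂) (hn : n₂ ≤ n₁)
    (X Z : Fin n₁ → Ω → ℝ)
    (hXmeas : ∀ j, Measurable (X j)) (hZmeas : ∀ j, Measurable (Z j))
    (hindep : iIndepFun (Sum.elim X Z) ℙ)
    (hXlaw : ∀ j, Measure.map (X j) ℙ = gaussianReal 0 P₁.toNNReal)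
    (hZlaw₁ : ∀ j : Fin n₁, (j : ℕ) < n₂ →
      Measure.map (Z j) ℙ = gaussianReal 0 (1 + h * P₂).toNNReal)
    (hZlaw₂ : ∀ j : Fin n₁, n₂ ≤ (j : ℕ) →
      Measure.map (Z j) ℙ = gaussianReal 0 1) :
    (1 / (n₁ : ℝ)) * variance (fun ω =>
        (∑ j ∈ Finset.univ.filter (fun j : Fin n₁ => (j : ℕ) < n₂),
          (Real.logb 2 (Real.exp 1) / (2 * (1 + h * (P₁ + P₂)))) *
            (h * (X j ω ^ 2 - P₁ / (1 + h * P₂) * Z j ω ^ 2) +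
              2 * Real.sqrt h * X j ω * Z j ω)) +
        ∑ j ∈ Finset.univ.filter (fun j : Fin n₁ => n₂ ≤ (j : ℕ)),
          (Real.logb 2 (Real.exp 1) / (2 * (1 + h * P₁))) *
            (h * (X j ω ^ 2 - P₁ * Z j ω ^ 2) +
              2 * Real.sqrt h * X j ω * Z j ω)) ℙ =
      Real.logb 2 (Real.exp 1) ^ 2 *
        (((n₂ : ℝ) / n₁) * (h * P₁ / (1 + h * (P₁ + P₂))) +
          (1 - (n₂ : ℝ) / n₁) * (h * P₁ / (1 + h * P₁))) := by
  classical
  set L := Real.logb 2 (Real.exp 1) with hL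
  set c₁ := L / (2 * (1 + h * (P₁ + P₂))) with hc₁
  set c₂ := L / (2 * (1 + h * P₁)) with hc₂
  have hb₁ : (0:ℝ) < 1 + h * P₂ := by positivity
  have hb₂ : (0:ℝ) < 1 + h * (P₁ + P₂) := by nlinarith
  have hb₃ : (0:ℝ) < 1 + h * P₁ := by nlinarith
  have hn₁ : 0 < n₁ := lt_of_lt_of_le hn₂ hn
  have hmeasS : ∀ k : Fin n₁ ⊕ Fin n₁, Measurable (Sum.elim X Z k) := by
    intro k
    cases k with
    | inl i => exact hXmeas i
    | inr i => exact hZmeas i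
  set F : Fin n₁ → Ω → ℝ := fun j ω =>
    if (j : ℕ) < n₂ then
      c₁ * h * X j ω ^ 2 + -(c₁ * h * (P₁ / (1 + h * P₂))) * Z j ω ^ 2
        + c₁ * (2 * Real.sqrt h) * (X j ω * Z j ω)
    else
      c₂ * h * X j ω ^ 2 + -(c₂ * h * P₁) * Z j ω ^ 2
        + c₂ * (2 * Real.sqrt h) * (X j ω * Z j ω)
    with hF
  -- per-index variance and Memℒp
  have key : ∀ j : Fin n₁, MemLp (F j) 2 ℙ ∧ variance (F j) ℙ =
      if (j : ℕ) < n₂ then L ^ 2 * (h * P₁ / (1 + h * (P₁ + P₂)))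
      else L ^ 2 * (h * P₁ / (1 + h * P₁)) := by
    intro j
    have hXZindep : IndepFun (X j) (Z j) ℙ := by
      have := hindep.indepFun
        (i := Sum.inl j) (j := Sum.inr j) (by simp)
      exact this
    by_cases hj : (j : ℕ) < n₂
    · have hq := var_quad (X j) (Z j) (hXmeas j) (hZmeas j) hXZindep P₁ (1 + h * P₂)
        hP₁ hb₁ (hXlaw j) (hZlaw₁ j hj)
        (c₁ * h) (-(c₁ * h * (P₁ / (1 + h * P₂)))) (c₁ * (2 * Real.sqrt h))
      have hFj : F j = fun ω =>
          c₁ * h * X j ω ^ 2 + -(c₁ * h * (P₁ / (1 + h * P₂))) * Z j ω ^ 2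
            + c₁ * (2 * Real.sqrt h) * (X j ω * Z j ω) := by
        funext ω
        simp only [hF]
        rw [if_pos hj]
      rw [hFj, if_pos hj]
      refine ⟨hq.1, ?_⟩
      rw [hq.2]
      have hγ : (c₁ * (2 * Real.sqrt h)) ^ 2 = c₁ ^ 2 * (4 * h) := by
        rw [mul_pow, mul_pow, Real.sq_sqrt hh.le]
        ring
      rw [hγ, hc₁]
      field_simp
      ring
    · have hZl : Measure.map (Z j) ℙ = gaussianReal 0 (1:ℝ).toNNReal := by
        rw [Real.toNNReal_one]
        exact hZlaw₂ j (not_lt.mp hj)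
      have hq := var_quad (X j) (Z j) (hXmeas j) (hZmeas j) hXZindep P₁ 1
        hP₁ one_pos (hXlaw j) hZl
        (c₂ * h) (-(c₂ * h * P₁)) (c₂ * (2 * Real.sqrt h))
      have hFj : F j = fun ω =>
          c₂ * h * X j ω ^ 2 + -(c₂ * h * P₁) * Z j ω ^ 2
            + c₂ * (2 * Real.sqrt h) * (X j ω * Z j ω) := by
        funext ω
        simp only [hF]
        rw [if_neg hj]
      rw [hFj, if_neg hj]
      refine ⟨hq.1, ?_⟩
      rw [hq.2]
      have hγ : (c₂ * (2 * Real.sqrt h)) ^ 2 = c₂ ^ 2 * (4 * h) := by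
        rw [mul_pow, mul_pow, Real.sq_sqrt hh.le]
        ring
      rw [hγ, hc₂]
      field_simp
      ring
  -- pairwise independence
  have hpairwise : Set.Pairwise ↑(Finset.univ : Finset (Fin n₁))
      (fun i j => IndepFun (F i) (F j) ℙ) := by
    intro i _ j _ hij
    have hp := hindep.indepFun_prodMk_prodMk hmeasS
      (Sum.inl i) (Sum.inr i) (Sum.inl j) (Sum.inr j)
      (by simp [hij]) (by simp) (by simp) (by simp [hij])
    have hφm : ∀ i : Fin n₁, Measurable (fun p : ℝ × ℝ =>
        if (i : ℕ) < n₂ then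
          c₁ * h * p.1 ^ 2 + -(c₁ * h * (P₁ / (1 + h * P₂))) * p.2 ^ 2
            + c₁ * (2 * Real.sqrt h) * (p.1 * p.2)
        else
          c₂ * h * p.1 ^ 2 + -(c₂ * h * P₁) * p.2 ^ 2
            + c₂ * (2 * Real.sqrt h) * (p.1 * p.2)) := by
      intro i
      by_cases hi : (i : ℕ) < n₂
      · simp only [if_pos hi]
        fun_prop
      · simp only [if_neg hi]
        fun_prop
    have := hp.comp (hφm i) (hφm j)
    simp only [hF]
    exact this
  -- sum over all indices
  have hbig : (fun ω =>
      (∑ j ∈ Finset.univ.filter (fun j : Fin n₁ => (j : ℕ) < n₂),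
        c₁ * (h * (X j ω ^ 2 - P₁ / (1 + h * P₂) * Z j ω ^ 2) +
          2 * Real.sqrt h * X j ω * Z j ω)) +
      ∑ j ∈ Finset.univ.filter (fun j : Fin n₁ => n₂ ≤ (j : ℕ)),
        c₂ * (h * (X j ω ^ 2 - P₁ * Z j ω ^ 2) +
          2 * Real.sqrt h * X j ω * Z j ω)) = ∑ j ∈ Finset.univ, F j := by
    funext ω
    rw [Finset.sum_apply]
    rw [← Finset.sum_filter_add_sum_filter_not Finset.univ
      (fun j : Fin n₁ => (j : ℕ) < n₂) (fun j => F j ω)]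
    congr 1
    · refine Finset.sum_congr rfl (fun j hj => ?_)
      have hj' := (Finset.mem_filter.mp hj).2
      simp only [hF]
      rw [if_pos hj']
      ring
    · have hfilt : Finset.univ.filter (fun j : Fin n₁ => n₂ ≤ (j : ℕ))
          = Finset.univ.filter (fun j : Fin n₁ => ¬ (j : ℕ) < n₂) := by
        apply Finset.filter_congr
        intro j _
        simp [not_lt]
      rw [hfilt]
      refine Finset.sum_congr rfl (fun j hj => ?_)
      have hj' := (Finset.mem_filter.mp hj).2
      simp only [hF]
      rw [if_neg hj']
      ring
  rw [hbig, IndepFun.variance_sum (fun i _ => (key i).1) hpairwise]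
  -- cardinalities
  have hcard1 : (Finset.univ.filter (fun j : Fin n₁ => (j : ℕ) < n₂)).card = n₂ := by
    have hset : Finset.univ.filter (fun j : Fin n₁ => (j : ℕ) < n₂)
        = Finset.map ⟨Fin.castLE hn, Fin.castLE_injective hn⟩ Finset.univ := by
      ext j
      simp only [Finset.mem_filter, Finset.mem_univ, true_and, Finset.mem_map,
        Function.Embedding.coeFn_mk]
      constructor
      · intro hj
        exact ⟨⟨(j : ℕ), hj⟩, Fin.ext rfl⟩
      · rintro ⟨i, rfl⟩
        exact i.isLt
    rw [hset, Finset.card_map, Finset.card_univ, Fintype.card_fin]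
  have hcard2 : (Finset.univ.filter (fun j : Fin n₁ => ¬ (j : ℕ) < n₂)).card = n₁ - n₂ := by
    have := Finset.card_filter_add_card_filter_not
      (s := (Finset.univ : Finset (Fin n₁))) (p := fun j : Fin n₁ => (j : ℕ) < n₂)
    rw [Finset.card_univ, Fintype.card_fin, hcard1] at this
    omega
  have hsumvar : ∑ j : Fin n₁, variance (F j) ℙ
      = (n₂ : ℝ) * (L ^ 2 * (h * P₁ / (1 + h * (P₁ + P₂))))
        + ((n₁ : ℝ) - n₂) * (L ^ 2 * (h * P₁ / (1 + h * P₁))) := by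
    rw [Finset.sum_congr rfl (fun j _ => (key j).2), Finset.sum_ite, Finset.sum_const,
      Finset.sum_const, hcard1, hcard2, nsmul_eq_mul, nsmul_eq_mul,
      Nat.cast_sub hn]
  rw [hsumvar]
  have hn₁' : (n₁ : ℝ) ≠ 0 := Nat.cast_ne_zero.mpr hn₁.ne'
  field_simp
end
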